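/- arXiv:2509.08801 — 2 statements merged into one kernel-verified Lean document; each statement's English description precedes it below -/
import Mathlib

section
/- Let P*(n) be defined by ∑_{n≥0} P*(n) q^n = ∏_{i≥1}(1-q^i)^4 (1-q^{5i})^4. Then for all n ≥ 0, P*(4n+3) ≡ 0 (mod 8). -/
open PowerSeries

/-- `f k` is the formal power series `∏_{i≥1} (1 - q^{k i})` over `ℤ`:
its `n`-th coefficient is the `n`-th coefficient of the partial product
`∏_{i=1}^{n+1} (1 - q^{k i})`, which stabilizes. -/
noncomputable def f (k : ℕ) : PowerSeries ℤ :=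
  PowerSeries.mk fun n =>
    PowerSeries.coeff n
      (∏ i ∈ Finset.range (n + 1), (1 - (PowerSeries.X : PowerSeries ℤ) ^ (k * (i + 1))))

/-- The multiplicative inverse `1 / f k` (the constant coefficient of `f k` is `1`). -/
noncomputable def finv (k : ℕ) : PowerSeries ℤ := PowerSeries.invOfUnit (f k) 1

open Finset

section Aux

variable {R : Type*} [CommRing R] {S : Type*} [CommRing S]

/-- Partial product `∏_{i=1}^{N} (1 - X^{k i})`. -/
noncomputable def Pp (R : Type*) [CommRing R] (k N : ℕ) : PowerSeries R :=
  ∏ i ∈ Finset.range N, (1 - (X : PowerSeries R) ^ (k * (i + 1)))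

/-- The first-order correction sum. -/
noncomputable def Usum (R : Type*) [CommRing R] (k N : ℕ) : PowerSeries R :=
  ∑ j ∈ Finset.range N,
    ((X : PowerSeries R) ^ (k * (j + 1)) + X ^ (3 * k * (j + 1))) *
      ∏ i ∈ (Finset.range N).erase j, (1 - (X : PowerSeries R) ^ (2 * k * (i + 1))) ^ 2

/-- Divisor-type double sum. -/
noncomputable def Dsum (R : Type*) [CommRing R] (k N T : ℕ) : PowerSeries R :=
  ∑ j ∈ Finset.range N, ∑ t ∈ Finset.range T,
    (X : PowerSeries R) ^ (k * (j + 1) * (2 * t + 1))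

lemma map_Pp (g : R →+* S) (k N : ℕ) :
    PowerSeries.map g (Pp R k N) = Pp S k N := by
  simp [Pp, map_prod, map_sub, map_pow, PowerSeries.map_X, map_one]

lemma map_Usum (g : R →+* S) (k N : ℕ) :
    PowerSeries.map g (Usum R k N) = Usum S k N := by
  simp [Usum, map_sum, map_mul, map_add, map_prod, map_sub, map_pow,
    PowerSeries.map_X, map_one]

lemma coeff_Pp_stable (k j : ℕ) (hk : 1 ≤ k) :
    ∀ N, j + 1 ≤ N → (coeff j) (Pp R k N) = coeff j (Pp R k (j + 1)) := by
  intro N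
  induction N with
  | zero => omega
  | succ N ih =>
    intro hN
    rcases Nat.lt_or_ge (j + 1) (N + 1) with h | h
    · have hPp : Pp R k (N + 1) = Pp R k N * (1 - X ^ (k * (N + 1))) := by
        rw [Pp, Finset.prod_range_succ, Pp]
      rw [hPp, mul_one_sub, map_sub, PowerSeries.coeff_mul_X_pow']
      have hle : ¬ (k * (N + 1) ≤ j) := by
        have : N + 1 ≤ k * (N + 1) := Nat.le_mul_of_pos_left _ hk
        omega
      rw [if_neg hle, sub_zero]
      exact ih (by omega)
    · have : j + 1 = N + 1 := by omega
      rw [this]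

lemma coeff_f_eq (k j N : ℕ) (hk : 1 ≤ k) (hN : j + 1 ≤ N) :
    coeff j (f k) = coeff j (Pp ℤ k N) := by
  rw [f, coeff_mk, coeff_Pp_stable k j hk N hN]
  rfl

lemma f_cong (k M : ℕ) (hk : 1 ≤ k) :
    (X : PowerSeries ℤ) ^ (M + 1) ∣ f k - Pp ℤ k (M + 1) := by
  rw [PowerSeries.X_pow_dvd_iff]
  intro m hm
  rw [map_sub, coeff_f_eq k m (M + 1) hk (by omega), sub_self]

lemma cong_coeff {a b : PowerSeries R} {M : ℕ}
    (h : (X : PowerSeries R) ^ (M + 1) ∣ a - b) {j : ℕ} (hj : j ≤ M) :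
    coeff j a = coeff j b := by
  rw [PowerSeries.X_pow_dvd_iff] at h
  have := h j (by omega)
  rw [map_sub] at this
  exact sub_eq_zero.mp this

lemma cong_mul {D a b c d : PowerSeries R} (h1 : D ∣ a - b) (h2 : D ∣ c - d) :
    D ∣ a * c - b * d := by
  have : a * c - b * d = (a - b) * c + b * (c - d) := by ring
  rw [this]
  exact dvd_add (h1.mul_right c) (h2.mul_left b)

lemma cong_pow {D a b : PowerSeries R} (h : D ∣ a - b) (m : ℕ) :
    D ∣ a ^ m - b ^ m :=
  h.trans (sub_dvd_pow_sub_pow a b m)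

/-- Support lemma: product of two series with support in multiples of `d`. -/
lemma supp_mul {g h : PowerSeries R} {d : ℕ}
    (hg : ∀ j, ¬ d ∣ j → coeff j g = 0) (hh : ∀ j, ¬ d ∣ j → coeff j h = 0) :
    ∀ j, ¬ d ∣ j → coeff j (g * h) = 0 := by
  intro j hj
  rw [PowerSeries.coeff_mul]
  apply Finset.sum_eq_zero
  rintro ⟨a, b⟩ hab
  rw [Finset.HasAntidiagonal.mem_antidiagonal] at hab
  by_cases h4 : d ∣ a
  · have : ¬ d ∣ b := fun hb => hj (by rw [← hab]; exact Nat.dvd_add h4 hb)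
    rw [hh b this, mul_zero]
  · rw [hg a h4, zero_mul]

lemma supp_Pp {d : ℕ} (k N : ℕ) (hd : d ∣ k) :
    ∀ j, ¬ d ∣ j → coeff j (Pp R k N) = 0 := by
  rw [Pp]
  apply Finset.prod_induction _ (fun g => ∀ j, ¬ d ∣ j → coeff j g = 0)
  · exact fun a b ha hb => supp_mul ha hb
  · intro j hj
    rw [PowerSeries.coeff_one, if_neg (fun h : j = 0 => hj (by rw [h]; exact dvd_zero d))]
  · intro i _ j hj
    rw [map_sub, PowerSeries.coeff_one, PowerSeries.coeff_X_pow,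
      if_neg (fun h : j = 0 => hj (by rw [h]; exact dvd_zero d)),
      if_neg (fun h : j = k * (i + 1) => hj (by rw [h]; exact hd.mul_right (i + 1)))]
    ring

end Aux

section Mod8

abbrev S8 := PowerSeries (ZMod 8)

lemma h8 : (8 : S8) = 0 := by
  have h : ((8 : ZMod 8)) = 0 := by decide
  calc (8 : S8) = PowerSeries.C 8 := (map_ofNat _ 8).symm
    _ = 0 := by rw [h, map_zero]

lemma h16 : (16 : S8) = 0 := by
  have h : ((16 : ZMod 8)) = 0 := by decide
  calc (16 : S8) = PowerSeries.C 16 := (map_ofNat _ 16).symm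
    _ = 0 := by rw [h, map_zero]

lemma key4 (y : S8) : (1 - y) ^ 4 = (1 - y ^ 2) ^ 2 + 4 * (y + y ^ 3) := by
  linear_combination (y ^ 2 - y - y ^ 3) * h8

lemma expand4 {R : Type*} [CommRing R] (h16' : (16 : R) = 0) (s : Finset ℕ) (a b : ℕ → R) :
    ∏ i ∈ s, (a i + 4 * b i) =
      (∏ i ∈ s, a i) + 4 * ∑ j ∈ s, b j * ∏ i ∈ s.erase j, a i := by
  classical
  induction s using Finset.induction_on with
  | empty => simp
  | @insert c s hc ih =>
    rw [Finset.prod_insert hc, Finset.prod_insert hc, ih, Finset.sum_insert hc,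
      Finset.erase_insert hc]
    have herase : ∀ j ∈ s, (insert c s).erase j = insert c (s.erase j) := by
      intro j hj
      exact Finset.erase_insert_of_ne (fun h => hc (h ▸ hj))
    have hsum2 : ∑ j ∈ s, b j * ∏ i ∈ (insert c s).erase j, a i
        = a c * ∑ j ∈ s, b j * ∏ i ∈ s.erase j, a i := by
      rw [Finset.mul_sum]
      apply Finset.sum_congr rfl
      intro j hj
      rw [herase j hj, Finset.prod_insert (fun h => hc (Finset.mem_of_mem_erase h))]
      ring
    rw [hsum2]
    linear_combination (b c * ∑ j ∈ s, b j * ∏ i ∈ s.erase j, a i) * h16'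

lemma step2All (k N : ℕ) :
    (Pp (ZMod 8) k N) ^ 4 = (Pp (ZMod 8) (2 * k) N) ^ 2 + 4 * Usum (ZMod 8) k N := by
  rw [Pp, ← Finset.prod_pow]
  have hfac : ∀ i ∈ Finset.range N,
      (1 - (X : S8) ^ (k * (i + 1))) ^ 4 =
        ((1 - X ^ (2 * k * (i + 1))) ^ 2 + 4 * (X ^ (k * (i + 1)) + X ^ (3 * k * (i + 1)))) := by
    intro i _
    have e2 : (X : S8) ^ (2 * k * (i + 1)) = (X ^ (k * (i + 1))) ^ 2 := by
      rw [← pow_mul]; congr 1; ring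
    have e3 : (X : S8) ^ (3 * k * (i + 1)) = (X ^ (k * (i + 1))) ^ 3 := by
      rw [← pow_mul]; congr 1; ring
    rw [e2, e3]
    exact key4 _
  rw [Finset.prod_congr rfl hfac,
    expand4 h16 (Finset.range N) (fun i => (1 - (X : S8) ^ (2 * k * (i + 1))) ^ 2)
      (fun j => (X : S8) ^ (k * (j + 1)) + X ^ (3 * k * (j + 1)))]
  rw [Usum, Pp, Finset.prod_pow]

end Mod8

section Mod2

abbrev S2 := PowerSeries (ZMod 2)

lemma h2 : (2 : S2) = 0 := by
  have h : ((2 : ZMod 2)) = 0 := by decide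
  calc (2 : S2) = PowerSeries.C 2 := (map_ofNat _ 2).symm
    _ = 0 := by rw [h, map_zero]

lemma sq2 (y : S2) : (1 - y) ^ 2 = 1 - y ^ 2 := by
  linear_combination (y ^ 2 - y) * h2

lemma Pp_sq2 (k N : ℕ) : (Pp (ZMod 2) (2 * k) N) ^ 2 = Pp (ZMod 2) (4 * k) N := by
  rw [Pp, Pp, ← Finset.prod_pow]
  apply Finset.prod_congr rfl
  intro i _
  rw [sq2]
  congr 1
  rw [← pow_mul]
  congr 1
  ring

lemma U_cong (k N M : ℕ) (hk : 1 ≤ k) :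
    (X : S2) ^ (M + 1) ∣
      Pp (ZMod 2) (4 * k) N * Dsum (ZMod 2) k N (M + 1) - Usum (ZMod 2) k N := by
  rw [Usum, Dsum, Finset.mul_sum, ← Finset.sum_sub_distrib]
  apply Finset.dvd_sum
  intro j hj
  set x := (X : S2) ^ (k * (j + 1)) with hx
  have e3 : (X : S2) ^ (3 * k * (j + 1)) = x ^ 3 := by
    rw [hx, ← pow_mul]; congr 1; ring
  have herase : ∏ i ∈ (Finset.range N).erase j, (1 - (X : S2) ^ (2 * k * (i + 1))) ^ 2
      = ∏ i ∈ (Finset.range N).erase j, (1 - (X : S2) ^ (4 * k * (i + 1))) := by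
    apply Finset.prod_congr rfl
    intro i _
    rw [sq2]
    congr 1
    rw [← pow_mul]
    congr 1
    ring
  set G := ∏ i ∈ (Finset.range N).erase j, (1 - (X : S2) ^ (4 * k * (i + 1))) with hG
  have e4 : (X : S2) ^ (4 * k * (j + 1)) = x ^ 4 := by
    rw [hx, ← pow_mul]; congr 1; ring
  have hPp : Pp (ZMod 2) (4 * k) N = (1 - x ^ 4) * G := by
    rw [Pp, ← Finset.mul_prod_erase _ _ hj, e4, hG]
  have hsum : ∑ t ∈ Finset.range (M + 1), (X : S2) ^ (k * (j + 1) * (2 * t + 1))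
      = x * ∑ t ∈ Finset.range (M + 1), (x ^ 2) ^ t := by
    rw [Finset.mul_sum]
    apply Finset.sum_congr rfl
    intro t _
    rw [hx, ← pow_mul, ← pow_mul, ← pow_add]
    congr 1
    ring
  have hgeom := geom_sum_mul ((x : S2) ^ 2) (M + 1)
  rw [herase, hPp, e3, hsum]
  set S := ∑ t ∈ Finset.range (M + 1), (x ^ 2) ^ t with hS
  set z := ((x : S2) ^ 2) ^ (M + 1) with hz
  have hid : (1 - x ^ 4) * G * (x * S) - (x + x ^ 3) * G = ((x + x ^ 3) * G) * z := by
    linear_combination (-(x * G * (1 + x ^ 2))) * hgeom + (-(z * x * (1 + x ^ 2) * G)) * h2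
  rw [hid]
  apply Dvd.dvd.mul_left
  rw [hz, hx, ← pow_mul, ← pow_mul]
  apply pow_dvd_pow
  calc M + 1 ≤ 2 * (M + 1) := by omega
    _ ≤ k * (j + 1) * (2 * (M + 1)) :=
        Nat.le_mul_of_pos_left _ (Nat.mul_pos hk j.succ_pos)

lemma Dvanish (k N T b : ℕ) (hk : k % 4 = 1) (hb : b % 4 = 3) (hbN : b ≤ N)
    (hbT : b < 2 * T) :
    coeff b (Dsum (ZMod 2) k N T) = 0 := by
  have hk1 : 1 ≤ k := by omega
  rw [Dsum]
  simp only [map_sum, PowerSeries.coeff_X_pow]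
  rw [← Finset.sum_product']
  have : (∑ p ∈ Finset.range N ×ˢ Finset.range T,
      if b = k * (p.1 + 1) * (2 * p.2 + 1) then (1 : ZMod 2) else 0)
      = ∑ p ∈ (Finset.range N ×ˢ Finset.range T).filter
          (fun p => b = k * (p.1 + 1) * (2 * p.2 + 1)), (1 : ZMod 2) := by
    rw [Finset.sum_filter]
  rw [this]
  -- facts about members
  have hmem : ∀ j t : ℕ, ((j, t) ∈ (Finset.range N ×ˢ Finset.range T).filter
      (fun p => b = k * (p.1 + 1) * (2 * p.2 + 1))) →
      b = k * (j + 1) * (2 * t + 1) ∧ j % 2 = 0 ∧ j + 1 ≤ b ∧ 2 * t + 1 ≤ b := by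
    intro j t hp
    rw [Finset.mem_filter] at hp
    obtain ⟨-, heq⟩ := hp
    have heq : b = k * (j + 1) * (2 * t + 1) := heq
    have hbpos : 0 < b := by omega
    have hd1 : (j + 1) ∣ b := ⟨k * (2 * t + 1), by rw [heq]; ring⟩
    have hd2 : (2 * t + 1) ∣ b := ⟨k * (j + 1), by rw [heq]; ring⟩
    have hj1 : j + 1 ≤ b := Nat.le_of_dvd hbpos hd1
    have ht1 : 2 * t + 1 ≤ b := Nat.le_of_dvd hbpos hd2
    have hjodd : j % 2 = 0 := by
      by_contra h
      have h2j : 2 ∣ (j + 1) := by omega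
      have : 2 ∣ b := h2j.trans hd1
      omega
    exact ⟨heq, hjodd, hj1, ht1⟩
  apply Finset.sum_involution (fun p _ => (2 * p.2, p.1 / 2))
  · intro a ha
    show (1 : ZMod 2) + 1 = 0
    decide
  · rintro ⟨j, t⟩ hp -
    obtain ⟨heq, hje, hj1, ht1⟩ := hmem j t hp
    intro hcon
    have h1 : 2 * t = j := congrArg Prod.fst hcon
    have hb' : b = k * (2 * t + 1) * (2 * t + 1) := by rw [heq, ← h1]
    set u := 2 * t + 1 with hu
    have hu4 : u % 4 = 1 ∨ u % 4 = 3 := by omega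
    have hmod : b % 4 = (k % 4 * (u % 4) % 4 * (u % 4)) % 4 := by
      rw [hb', Nat.mul_mod, Nat.mul_mod k u]
    rcases hu4 with h | h <;> rw [hk, h] at hmod <;> omega
  · rintro ⟨j, t⟩ hp
    obtain ⟨heq, hje, hj1, ht1⟩ := hmem j t hp
    show (2 * (j / 2), 2 * t / 2) = (j, t)
    have e1 : 2 * (j / 2) = j := by omega
    have e2 : 2 * t / 2 = t := by omega
    rw [e1, e2]
  · rintro ⟨j, t⟩ hp
    obtain ⟨heq, hje, hj1, ht1⟩ := hmem j t hp
    rw [Finset.mem_filter]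
    constructor
    · rw [Finset.mem_product]
      constructor
      · show 2 * t ∈ Finset.range N
        rw [Finset.mem_range]
        omega
      · show j / 2 ∈ Finset.range T
        rw [Finset.mem_range]
        omega
    · show b = k * (2 * t + 1) * (2 * (j / 2) + 1)
      have e1 : 2 * (j / 2) + 1 = j + 1 := by omega
      rw [e1, heq]
      ring

end Mod2

theorem stmt1 : ∀ n : ℕ, (8 : ℤ) ∣ PowerSeries.coeff (4 * n + 3) (f 1 ^ 4 * f 5 ^ 4) := by
  intro n
  set M := 4 * n + 3 with hM
  have hM4 : M % 4 = 3 := by omega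
  set π8 := Int.castRingHom (ZMod 8) with hπ8
  have hcast : ((PowerSeries.coeff M (f 1 ^ 4 * f 5 ^ 4) : ℤ) : ZMod 8) = 0 →
      (8 : ℤ) ∣ PowerSeries.coeff M (f 1 ^ 4 * f 5 ^ 4) := by
    intro h
    have := (ZMod.intCast_zmod_eq_zero_iff_dvd _ 8).mp h
    exact_mod_cast this
  apply hcast
  have hmap : PowerSeries.coeff M
      ((PowerSeries.map π8 (f 1)) ^ 4 * (PowerSeries.map π8 (f 5)) ^ 4)
      = ((PowerSeries.coeff M (f 1 ^ 4 * f 5 ^ 4) : ℤ) : ZMod 8) := by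
    rw [← map_pow, ← map_pow, ← map_mul, PowerSeries.coeff_map]
    rfl
  rw [← hmap]
  -- congruence to partial products
  have c1 : (X : S8) ^ (M + 1) ∣ PowerSeries.map π8 (f 1) - Pp (ZMod 8) 1 (M + 1) := by
    have h2 := map_dvd (PowerSeries.map π8) (f_cong 1 M le_rfl)
    rwa [map_pow, PowerSeries.map_X, map_sub, map_Pp] at h2
  have c5 : (X : S8) ^ (M + 1) ∣ PowerSeries.map π8 (f 5) - Pp (ZMod 8) 5 (M + 1) := by
    have h2 := map_dvd (PowerSeries.map π8) (f_cong 5 M (by norm_num))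
    rwa [map_pow, PowerSeries.map_X, map_sub, map_Pp] at h2
  have cmain := cong_mul (cong_pow c1 4) (cong_pow c5 4)
  rw [cong_coeff cmain le_rfl]
  rw [step2All 1 (M + 1), step2All 5 (M + 1)]
  have hprod : (Pp (ZMod 8) (2 * 1) (M + 1) ^ 2 + 4 * Usum (ZMod 8) 1 (M + 1)) *
        (Pp (ZMod 8) (2 * 5) (M + 1) ^ 2 + 4 * Usum (ZMod 8) 5 (M + 1))
      = Pp (ZMod 8) (2 * 1) (M + 1) ^ 2 * Pp (ZMod 8) (2 * 5) (M + 1) ^ 2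
        + 4 * (Usum (ZMod 8) 1 (M + 1) * Pp (ZMod 8) (2 * 5) (M + 1) ^ 2
          + Usum (ZMod 8) 5 (M + 1) * Pp (ZMod 8) (2 * 1) (M + 1) ^ 2) := by
    linear_combination (Usum (ZMod 8) 1 (M + 1) * Usum (ZMod 8) 5 (M + 1)) * h16
  rw [hprod, map_add]
  have hodd : PowerSeries.coeff M
      (Pp (ZMod 8) (2 * 1) (M + 1) ^ 2 * Pp (ZMod 8) (2 * 5) (M + 1) ^ 2) = 0 := by
    have h2a := supp_Pp (R := ZMod 8) (d := 2) (2 * 1) (M + 1) ⟨1, rfl⟩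
    have h2b := supp_Pp (R := ZMod 8) (d := 2) (2 * 5) (M + 1) ⟨5, rfl⟩
    have hrw : Pp (ZMod 8) (2 * 1) (M + 1) ^ 2 * Pp (ZMod 8) (2 * 5) (M + 1) ^ 2
        = (Pp (ZMod 8) (2 * 1) (M + 1) * Pp (ZMod 8) (2 * 1) (M + 1)) *
          (Pp (ZMod 8) (2 * 5) (M + 1) * Pp (ZMod 8) (2 * 5) (M + 1)) := by ring
    rw [hrw]
    exact supp_mul (supp_mul h2a h2a) (supp_mul h2b h2b) M (by omega)
  rw [hodd, zero_add]
  set W := Usum (ZMod 8) 1 (M + 1) * Pp (ZMod 8) (2 * 5) (M + 1) ^ 2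
    + Usum (ZMod 8) 5 (M + 1) * Pp (ZMod 8) (2 * 1) (M + 1) ^ 2 with hW
  have h4C : (4 : S8) = PowerSeries.C 4 := (map_ofNat _ 4).symm
  rw [h4C, PowerSeries.coeff_C_mul]
  set π2 := ZMod.castHom (show (2 : ℕ) ∣ 8 by norm_num) (ZMod 2) with hπ2
  have hw2 : π2 (PowerSeries.coeff M W) = 0 := by
    rw [← PowerSeries.coeff_map]
    have hmapW : PowerSeries.map π2 W
        = Usum (ZMod 2) 1 (M + 1) * Pp (ZMod 2) (2 * 5) (M + 1) ^ 2
          + Usum (ZMod 2) 5 (M + 1) * Pp (ZMod 2) (2 * 1) (M + 1) ^ 2 := by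
      rw [hW, map_add, map_mul, map_mul, map_pow, map_pow, map_Usum, map_Usum,
        map_Pp, map_Pp]
    rw [hmapW, Pp_sq2 5 (M + 1), Pp_sq2 1 (M + 1)]
    have cu1 := U_cong 1 (M + 1) M le_rfl
    have cu5 := U_cong 5 (M + 1) M (by norm_num)
    have crefl : ∀ g : S2, (X : S2) ^ (M + 1) ∣ g - g := fun g => by simp
    have d1 := cong_mul cu1 (crefl (Pp (ZMod 2) (4 * 5) (M + 1)))
    have d5 := cong_mul cu5 (crefl (Pp (ZMod 2) (4 * 1) (M + 1)))
    have cbig : (X : S2) ^ (M + 1) ∣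
        (Pp (ZMod 2) (4 * 1) (M + 1) * Dsum (ZMod 2) 1 (M + 1) (M + 1) * Pp (ZMod 2) (4 * 5) (M + 1)
          + Pp (ZMod 2) (4 * 5) (M + 1) * Dsum (ZMod 2) 5 (M + 1) (M + 1) * Pp (ZMod 2) (4 * 1) (M + 1))
        - (Usum (ZMod 2) 1 (M + 1) * Pp (ZMod 2) (4 * 5) (M + 1)
          + Usum (ZMod 2) 5 (M + 1) * Pp (ZMod 2) (4 * 1) (M + 1)) := by
      have e : ∀ A A' B B' : S2, (A + B) - (A' + B') = (A - A') + (B - B') :=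
        fun _ _ _ _ => by ring
      rw [e]
      exact dvd_add d1 d5
    rw [← cong_coeff cbig le_rfl]
    have hH : ∀ j, ¬ (4 : ℕ) ∣ j →
        PowerSeries.coeff j (Pp (ZMod 2) (4 * 1) (M + 1) * Pp (ZMod 2) (4 * 5) (M + 1)) = 0 :=
      supp_mul (supp_Pp _ _ ⟨1, rfl⟩) (supp_Pp _ _ ⟨5, rfl⟩)
    have key : ∀ k : ℕ, k % 4 = 1 → PowerSeries.coeff M
        (Pp (ZMod 2) (4 * 1) (M + 1) * Pp (ZMod 2) (4 * 5) (M + 1) * Dsum (ZMod 2) k (M + 1) (M + 1)) = 0 := by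
      intro k hk
      rw [PowerSeries.coeff_mul]
      apply Finset.sum_eq_zero
      rintro ⟨a, b⟩ hab
      rw [Finset.HasAntidiagonal.mem_antidiagonal] at hab
      by_cases h4 : (4 : ℕ) ∣ a
      · rw [Dvanish k (M + 1) (M + 1) b hk (by omega) (by omega) (by omega), mul_zero]
      · rw [hH a h4, zero_mul]
    have e1 : Pp (ZMod 2) (4 * 1) (M + 1) * Dsum (ZMod 2) 1 (M + 1) (M + 1) * Pp (ZMod 2) (4 * 5) (M + 1)
        = Pp (ZMod 2) (4 * 1) (M + 1) * Pp (ZMod 2) (4 * 5) (M + 1) * Dsum (ZMod 2) 1 (M + 1) (M + 1) := by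
      ring
    have e5 : Pp (ZMod 2) (4 * 5) (M + 1) * Dsum (ZMod 2) 5 (M + 1) (M + 1) * Pp (ZMod 2) (4 * 1) (M + 1)
        = Pp (ZMod 2) (4 * 1) (M + 1) * Pp (ZMod 2) (4 * 5) (M + 1) * Dsum (ZMod 2) 5 (M + 1) (M + 1) := by
      ring
    rw [e1, e5, map_add, key 1 (by norm_num), key 5 (by norm_num), add_zero]
  have hfin : ∀ x : ZMod 8, π2 x = 0 → 4 * x = 0 := by decide
  exact hfin _ hw2
end

section
/- Let T*(n) be defined by ∑_{n≥0} T*(n) q^n = f_1^5 f_{10}^5 / (f_2 f_5), and M(n) by ∑_{n≥0} M(n) q^n = f_2^5 f_5^5 / (f_1 f_{10}). Then for all n ≥ 0, T*(5n+3) = 5·M(n). -/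
open PowerSeries

namespace Stmt13

noncomputable section

abbrev RR := PowerSeries ℤ

/-- truncated congruence: agree below degree `r` -/
def De (r : ℕ) (a b : RR) : Prop := (X : RR) ^ r ∣ a - b

lemma De.rfl {r : ℕ} {a : RR} : De r a a := by simp [De]

lemma De.of_eq {r : ℕ} {a b : RR} (h : a = b) : De r a b := by simp [De, h]

lemma De.symm {r : ℕ} {a b : RR} (h : De r a b) : De r b a := by
  have := h.neg_right; simpa [De] using this

lemma De.trans {r : ℕ} {a b c : RR} (h1 : De r a b) (h2 : De r b c) : De r a c := by
  have := dvd_add h1 h2; simpa [De] using this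

lemma De.mul {r : ℕ} {a b c d : RR} (h1 : De r a b) (h2 : De r c d) :
    De r (a * c) (b * d) := by
  have e : a * c - b * d = a * (c - d) + (a - b) * d := by ring
  rw [De, e]
  exact dvd_add (Dvd.dvd.mul_left h2 a) (Dvd.dvd.mul_right h1 d)

lemma De.mono {r r' : ℕ} {a b : RR} (hr : r' ≤ r) (h : De r a b) : De r' a b :=
  dvd_trans (pow_dvd_pow _ hr) h

lemma De_iff_coeff {r : ℕ} {a b : RR} :
    De r a b ↔ ∀ i < r, coeff i a = coeff i b := by
  rw [De, X_pow_dvd_iff]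
  constructor
  · intro h i hi; have := h i hi; rw [map_sub, sub_eq_zero] at this; exact this
  · intro h i hi; rw [map_sub, sub_eq_zero]; exact h i hi

lemma De.coeff {r : ℕ} {a b : RR} (h : De r a b) {i : ℕ} (hi : i < r) :
    coeff i a = coeff i b := De_iff_coeff.mp h i hi

lemma De.sum {r : ℕ} {s : Finset ℕ} {g h : ℕ → RR} (hg : ∀ m ∈ s, De r (g m) (h m)) :
    De r (∑ m ∈ s, g m) (∑ m ∈ s, h m) := by
  rw [De, ← Finset.sum_sub_distrib]
  exact Finset.dvd_sum hg

lemma De.smul {r : ℕ} {a b : RR} (c : ℤ) (h : De r a b) : De r ((c : RR) * a) ((c:RR) * b) :=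
  De.mul De.rfl h

lemma De_zero_of_dvd {r t : ℕ} (a : RR) (ht : r ≤ t) : De r (X ^ t * a) 0 := by
  rw [De, sub_zero]
  exact Dvd.dvd.mul_right (pow_dvd_pow _ ht) a

/-- finite partial products of `f k` -/
def Pf (k m : ℕ) : RR := ∏ i ∈ Finset.range m, (1 - X ^ (k * (i + 1)))

lemma De_one_sub_mul {r t : ℕ} (a : RR) (ht : r ≤ t) : De r ((1 - X ^ t) * a) a := by
  have e : (1 - X ^ t) * a - a = -(X ^ t * a) := by ring
  rw [De, e]
  exact ((pow_dvd_pow (X : RR) ht).mul_right a).neg_right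

lemma Pf_succ (k m : ℕ) : Pf k (m + 1) = Pf k m * (1 - X ^ (k * (m + 1))) :=
  Finset.prod_range_succ _ _

lemma Pf_stab {k r m₀ m : ℕ} (h0 : r ≤ k * (m₀ + 1)) (hm : m₀ ≤ m) :
    De r (Pf k m) (Pf k m₀) := by
  induction m with
  | zero => have : m₀ = 0 := Nat.le_zero.mp hm; subst this; exact De.rfl
  | succ m ih =>
    rcases Nat.lt_or_ge m₀ (m+1) with h | h
    · have hm' : m₀ ≤ m := Nat.lt_succ_iff.mp h
      refine De.trans ?_ (ih hm')
      rw [Pf_succ, mul_comm]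
      refine De_one_sub_mul _ (le_trans h0 ?_)
      exact Nat.mul_le_mul_left k (by omega)
    · have : m₀ = m + 1 := le_antisymm hm h
      subst this; exact De.rfl

lemma coeff_f (k n : ℕ) : coeff n (f k) = coeff n (Pf k (n + 1)) := by
  simp [f, Pf, coeff_mk]

lemma De_f_Pf {k : ℕ} (hk : 1 ≤ k) (r : ℕ) : De r (f k) (Pf k r) := by
  rw [De_iff_coeff]
  intro i hi
  rw [coeff_f]
  have h1 : De (i + 1) (Pf k r) (Pf k (i + 1)) := by
    refine Pf_stab ?_ (by omega)
    calc i + 1 ≤ i + 2 := by omega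
    _ = 1 * (i + 2) := by omega
    _ ≤ k * (i + 1 + 1) := by exact Nat.mul_le_mul hk (by omega)
  exact (h1.coeff (by omega)).symm

lemma constCoeff_Pf (k m : ℕ) (hk : 1 ≤ k) : constantCoeff (Pf k m) = 1 := by
  rw [Pf, map_prod]
  refine Finset.prod_eq_one fun i _ => ?_
  rw [map_sub, map_one, map_pow, constantCoeff_X]
  have : k * (i + 1) ≠ 0 := by positivity
  rw [zero_pow this, sub_zero]

lemma constCoeff_f {k : ℕ} (hk : 1 ≤ k) : constantCoeff (f k) = 1 := by
  rw [← coeff_zero_eq_constantCoeff_apply, coeff_f, coeff_zero_eq_constantCoeff_apply]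
  exact constCoeff_Pf k 1 hk

lemma f_mul_finv {k : ℕ} (hk : 1 ≤ k) : f k * finv k = 1 :=
  mul_invOfUnit _ _ (by simp [constCoeff_f hk])

lemma finv_unique {k : ℕ} (hk : 1 ≤ k) {g : RR} (h : f k * g = 1) : g = finv k := by
  calc g = g * (f k * finv k) := by rw [f_mul_finv hk, mul_one]
  _ = (f k * g) * finv k := by ring
  _ = finv k := by rw [h, one_mul]

/-- substitution q ↦ q^5, as a function -/
def E5f (s : RR) : RR := mk fun n => if n % 5 = 0 then coeff (n / 5) s else 0

lemma coeff_E5f (s : RR) (n : ℕ) :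
    coeff n (E5f s) = if n % 5 = 0 then coeff (n / 5) s else 0 := by
  simp [E5f, coeff_mk]

lemma coeff_E5f_mul5 (s : RR) (n : ℕ) : coeff (5 * n) (E5f s) = coeff n s := by
  rw [coeff_E5f]
  simp [Nat.mul_mod_right, Nat.mul_div_cancel_left _ (by norm_num : 0 < 5)]

lemma E5f_add (a b : RR) : E5f (a + b) = E5f a + E5f b := by
  refine PowerSeries.ext fun n => ?_
  rw [coeff_E5f, map_add, map_add, coeff_E5f, coeff_E5f]
  split <;> simp

lemma E5f_mul (a b : RR) : E5f (a * b) = E5f a * E5f b := by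
  refine PowerSeries.ext fun n => ?_
  rw [coeff_E5f]
  rcases Nat.eq_zero_or_pos (n % 5) with h5 | h5
  · obtain ⟨m, rfl⟩ : ∃ m, n = 5 * m := ⟨n / 5, by omega⟩
    rw [if_pos h5, Nat.mul_div_cancel_left _ (by norm_num : 0 < 5), PowerSeries.coeff_mul,
      PowerSeries.coeff_mul]
    conv_rhs => rw [← Finset.sum_filter_of_ne (p := fun x : ℕ × ℕ => x.1 % 5 = 0 ∧ x.2 % 5 = 0)
      (fun x hx hne => by
        by_contra hc
        rcases not_and_or.mp hc with h | h
        · exact hne (by rw [coeff_E5f a x.1, if_neg h, zero_mul])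
        · exact hne (by rw [coeff_E5f b x.2, if_neg h, mul_zero]))]
    refine Finset.sum_bij' (fun x (_ : x ∈ Finset.HasAntidiagonal.antidiagonal m) => ((5 * x.1, 5 * x.2) : ℕ × ℕ))
      (fun x _ => ((x.1 / 5, x.2 / 5) : ℕ × ℕ)) ?_ ?_ ?_ ?_ ?_
    · intro x hx
      simp only [Finset.mem_filter, Finset.HasAntidiagonal.mem_antidiagonal] at hx ⊢
      omega
    · intro x hx
      simp only [Finset.mem_filter, Finset.HasAntidiagonal.mem_antidiagonal] at hx ⊢
      omega
    · intro x hx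
      simp only [Finset.HasAntidiagonal.mem_antidiagonal] at hx
      simp [Nat.mul_div_cancel_left]
    · intro x hx
      simp only [Finset.mem_filter, Finset.HasAntidiagonal.mem_antidiagonal] at hx
      obtain ⟨x1, x2⟩ := x
      simp only [Prod.mk.injEq]
      constructor <;> omega
    · intro x hx
      rw [coeff_E5f_mul5, coeff_E5f_mul5]
  · rw [if_neg (by omega), PowerSeries.coeff_mul]
    refine (Finset.sum_eq_zero fun x hx => ?_).symm
    simp only [Finset.HasAntidiagonal.mem_antidiagonal] at hx
    rcases Nat.eq_zero_or_pos (x.1 % 5) with h | h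
    · rw [coeff_E5f b x.2, if_neg (by omega), mul_zero]
    · rw [coeff_E5f a x.1, if_neg (by omega), zero_mul]

def E5 : RR →+* RR where
  toFun := E5f
  map_one' := by
    refine PowerSeries.ext fun n => ?_
    rw [coeff_E5f]
    simp only [coeff_one]
    split_ifs <;> first | rfl | omega
  map_mul' := E5f_mul
  map_zero' := by refine PowerSeries.ext fun n => ?_; simp [coeff_E5f]
  map_add' := E5f_add

lemma coeff_E5 (s : RR) (n : ℕ) :
    coeff n (E5 s) = if n % 5 = 0 then coeff (n / 5) s else 0 := coeff_E5f s n

lemma coeff_E5_mul5 (s : RR) (n : ℕ) : coeff (5 * n) (E5 s) = coeff n s :=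
  coeff_E5f_mul5 s n

lemma E5_X_pow (t : ℕ) : E5 (X ^ t) = X ^ (5 * t) := by
  refine PowerSeries.ext fun n => ?_
  rw [coeff_E5, coeff_X_pow, coeff_X_pow]
  by_cases h : n % 5 = 0
  · rw [if_pos h]
    by_cases h2 : n / 5 = t
    · rw [if_pos h2, if_pos (by omega)]
    · rw [if_neg h2, if_neg (by omega)]
  · rw [if_neg h, if_neg (by omega)]

lemma E5_Pf (k m : ℕ) : E5 (Pf k m) = Pf (5 * k) m := by
  rw [Pf, Pf, map_prod]
  refine Finset.prod_congr rfl fun i _ => ?_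
  rw [map_sub, map_one, E5_X_pow]
  ring_nf

lemma E5_f (k : ℕ) (hk : 1 ≤ k) : E5 (f k) = f (5 * k) := by
  refine PowerSeries.ext fun n => ?_
  rw [coeff_E5]
  by_cases h5 : n % 5 = 0
  · rw [if_pos h5]
    obtain ⟨m, rfl⟩ : ∃ m, n = 5 * m := ⟨n / 5, by omega⟩
    rw [Nat.mul_div_cancel_left _ (by norm_num : 0 < 5)]
    rw [coeff_f k m, coeff_f (5*k) (5*m)]
    have h1 : De (5*m + 1) (Pf (5*k) (5*m+1)) (Pf (5*k) (m+1)) :=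
      Pf_stab (by nlinarith) (by omega)
    rw [h1.coeff (by omega), ← E5_Pf, ← coeff_E5_mul5 (Pf k (m+1)) m]
  · rw [if_neg h5, coeff_f]
    have : Pf (5*k) (n+1) = E5 (Pf k (n+1)) := (E5_Pf k (n+1)).symm
    rw [this, coeff_E5, if_neg h5]

lemma E5_finv (k : ℕ) (hk : 1 ≤ k) : E5 (finv k) = finv (5 * k) := by
  refine finv_unique (by omega) ?_
  rw [← E5_f k hk, ← map_mul, f_mul_finv hk, map_one]


/-- Gaussian binomial with base Q (Pascal I built in) -/
def qb (Q : RR) : ℕ → ℕ → RR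
  | 0, 0 => 1
  | 0, _ + 1 => 0
  | N + 1, 0 => qb Q N 0
  | N + 1, k + 1 => qb Q N (k + 1) + Q ^ (N - k) * qb Q N k

@[simp] lemma qb_zero_zero (Q : RR) : qb Q 0 0 = 1 := rfl

@[simp] lemma qb_zero_right (Q : RR) (N : ℕ) : qb Q N 0 = 1 := by
  induction N with
  | zero => rfl
  | succ N ih => rw [qb, ih]

lemma qb_eq_zero (Q : RR) {N k : ℕ} (h : N < k) : qb Q N k = 0 := by
  induction N generalizing k with
  | zero => obtain ⟨k', rfl⟩ : ∃ k', k = k' + 1 := ⟨k - 1, by omega⟩; rfl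
  | succ N ih =>
    obtain ⟨k', rfl⟩ : ∃ k', k = k' + 1 := ⟨k - 1, by omega⟩
    rw [qb, ih (by omega), ih (by omega), mul_zero, add_zero]

@[simp] lemma qb_diag (Q : RR) (N : ℕ) : qb Q N N = 1 := by
  induction N with
  | zero => rfl
  | succ N ih => rw [qb, qb_eq_zero Q (by omega), ih, zero_add, Nat.sub_self, pow_zero, one_mul]

lemma qb_pascal1 (Q : RR) (N k : ℕ) :
    qb Q (N + 1) (k + 1) = qb Q N (k + 1) + Q ^ (N - k) * qb Q N k := rfl

/-- finite products ∏ (1 - Q^{i+1}) -/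
def FQ (Q : RR) (m : ℕ) : RR := ∏ i ∈ Finset.range m, (1 - Q ^ (i + 1))

@[simp] lemma FQ_zero (Q : RR) : FQ Q 0 = 1 := rfl

lemma FQ_succ (Q : RR) (m : ℕ) : FQ Q (m + 1) = FQ Q m * (1 - Q ^ (m + 1)) :=
  Finset.prod_range_succ _ _

lemma constCoeff_FQ (Q : RR) (hQ0 : constantCoeff Q = 0) (m : ℕ) :
    constantCoeff (FQ Q m) = 1 := by
  rw [FQ, map_prod]
  refine Finset.prod_eq_one fun i _ => ?_
  rw [map_sub, map_one, map_pow, hQ0, zero_pow (by omega), sub_zero]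

lemma isUnit_FQ (Q : RR) (hQ0 : constantCoeff Q = 0) (m : ℕ) : IsUnit (FQ Q m) :=
  IsUnit.of_mul_eq_one _ (mul_invOfUnit (FQ Q m) 1 (by simp [constCoeff_FQ Q hQ0 m]))

/-- the product formula for Gaussian binomials -/
lemma qb_mul_FQ (Q : RR) : ∀ N k : ℕ, k ≤ N →
    qb Q N k * (FQ Q k * FQ Q (N - k)) = FQ Q N := by
  intro N
  induction N with
  | zero => intro k hk; interval_cases k; simp
  | succ N ih =>
    intro k hk
    match k with
    | 0 => simp
    | j + 1 =>
      rcases Nat.lt_or_ge j N with hj | hj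
      · -- j + 1 ≤ N
        have h1 : N + 1 - (j + 1) = N - (j + 1) + 1 := by omega
        have h6 : N - (j + 1) + 1 = N - j := by omega
        have hFNj : FQ Q (N - j) = FQ Q (N - (j+1)) * (1 - Q ^ (N - j)) := by
          conv_lhs => rw [show N - j = (N - (j+1)) + 1 from by omega]
          rw [FQ_succ, h6]
        have hA : qb Q N (j+1) * (FQ Q (j+1) * FQ Q (N - (j+1))) = FQ Q N := ih (j+1) (by omega)
        have hB : qb Q N j * (FQ Q j * FQ Q (N - j)) = FQ Q N := ih j (by omega)
        have hFj1 : FQ Q (j + 1) = FQ Q j * (1 - Q ^ (j + 1)) := FQ_succ Q j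
        have hpow : Q ^ (N - j) * Q ^ (j + 1) = Q ^ (N + 1) := by
          rw [← pow_add]; congr 1; omega
        rw [qb_pascal1, h1, FQ_succ Q (N - (j+1)), h6]
        calc (qb Q N (j+1) + Q ^ (N-j) * qb Q N j)
              * (FQ Q (j+1) * (FQ Q (N - (j+1)) * (1 - Q ^ (N - j))))
            = (qb Q N (j+1) * (FQ Q (j+1) * FQ Q (N - (j+1)))) * (1 - Q ^ (N-j))
              + (Q ^ (N-j) * (1 - Q ^ (j+1)))
                * (qb Q N j * (FQ Q j * (FQ Q (N - (j+1)) * (1 - Q ^ (N - j))))) := by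
              rw [hFj1]; ring
          _ = FQ Q N * (1 - Q ^ (N-j))
              + (Q ^ (N-j) * (1 - Q ^ (j+1))) * (qb Q N j * (FQ Q j * FQ Q (N - j))) := by
              rw [hA, ← hFNj]
          _ = FQ Q N * (1 - Q ^ (N-j)) + (Q ^ (N-j) * (1 - Q ^ (j+1))) * FQ Q N := by rw [hB]
          _ = FQ Q N * (1 - Q ^ (N-j) * Q ^ (j+1)) := by ring
          _ = FQ Q N * (1 - Q ^ (N+1)) := by rw [hpow]
          _ = FQ Q (N+1) := (FQ_succ Q N).symm
      · -- j + 1 = N + 1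
        have : j = N := by omega
        subst this
        rw [qb_pascal1, qb_eq_zero Q (by omega), Nat.sub_self, pow_zero, one_mul, qb_diag,
          zero_add, one_mul, Nat.sub_self, FQ_zero, mul_one]

/-- Pascal II -/
lemma qb_pascal2 (Q : RR) (hQ0 : constantCoeff Q = 0) (N k : ℕ) :
    qb Q (N + 1) (k + 1) = Q ^ (k + 1) * qb Q N (k + 1) + qb Q N k := by
  rcases Nat.lt_or_ge N (k + 1) with h | h
  · rcases Nat.lt_or_ge N k with h2 | h2
    · rw [qb_eq_zero Q (by omega), qb_eq_zero Q (by omega), qb_eq_zero Q (by omega)]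
      ring
    · have : k = N := by omega
      subst this
      rw [qb_diag, qb_eq_zero Q (by omega), qb_diag, mul_zero, zero_add]
  · -- k + 1 ≤ N : cancellation against units
    have hu : IsUnit (FQ Q (k + 1) * FQ Q (N - k)) :=
      (isUnit_FQ Q hQ0 (k+1)).mul (isUnit_FQ Q hQ0 (N - k))
    refine hu.mul_right_cancel ?_
    have hL : qb Q (N + 1) (k + 1) * (FQ Q (k + 1) * FQ Q (N - k)) = FQ Q (N + 1) := by
      have : N + 1 - (k + 1) = N - k := by omega
      rw [← this]
      exact qb_mul_FQ Q (N + 1) (k + 1) (by omega)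
    rw [hL, add_mul]
    have e1 : Q ^ (k + 1) * qb Q N (k + 1) * (FQ Q (k + 1) * FQ Q (N - k))
        = Q ^ (k + 1) * (1 - Q ^ (N - k)) * FQ Q N := by
      have : FQ Q (N - k) = FQ Q (N - (k+1)) * (1 - Q ^ (N - k)) := by
        conv_lhs => rw [show N - k = (N - (k+1)) + 1 from by omega]
        rw [FQ_succ, show N - (k+1) + 1 = N - k from by omega]
      rw [this, ← qb_mul_FQ Q N (k + 1) h]
      ring
    have e2 : qb Q N k * (FQ Q (k + 1) * FQ Q (N - k))
        = (1 - Q ^ (k + 1)) * FQ Q N := by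
      rw [FQ_succ Q k, ← qb_mul_FQ Q N k (by omega)]
      ring
    rw [e1, e2, FQ_succ Q N]
    have h5 : Q ^ (k + 1) * Q ^ (N - k) = Q ^ (N + 1) := by
      rw [← pow_add]; congr 1; omega
    linear_combination (FQ Q N) * h5

/-- double Pascal for even steps -/
lemma qb_double (Q : RR) (hQ0 : constantCoeff Q = 0) (N m : ℕ) (hm : m ≤ 2 * N) :
    qb Q (2 * N + 2) (m + 2)
      = Q ^ (m + 2) * qb Q (2 * N) (m + 2) + (1 + Q ^ (2 * N + 1)) * qb Q (2 * N) (m + 1)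
        + Q ^ (2 * N - m) * qb Q (2 * N) m := by
  rcases Nat.lt_or_ge m (2 * N) with h | h
  · have e0 : (2 : ℕ) * N + 2 = (2 * N + 1) + 1 := by omega
    rw [e0, qb_pascal2 Q hQ0 (2 * N + 1) (m + 1), qb_pascal1 Q (2 * N) (m + 1),
      qb_pascal1 Q (2 * N) m]
    have h2 : Q ^ (m + 2) * Q ^ (2 * N - (m + 1)) = Q ^ (2 * N + 1) := by
      rw [← pow_add]; congr 1; omega
    linear_combination (qb Q (2 * N) (m + 1)) * h2
  · have hm2 : m = 2 * N := by omega
    subst hm2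
    rw [qb_eq_zero Q (show 2*N < 2*N+2 from by omega), qb_eq_zero Q (show 2*N < 2*N+1 from by omega),
      Nat.sub_self, pow_zero, qb_diag, qb_diag]
    ring



/-- Sn j = j(j-1)/2 -/
def Sn : ℕ → ℕ
  | 0 => 0
  | j + 1 => Sn j + j

lemma Sn_succ (j : ℕ) : Sn (j + 1) = Sn j + j := rfl

/-- centered monomials -/
def Ve (Q Xa Xb : RR) (N m : ℕ) : RR :=
  if N ≤ m then Q ^ Sn (m - N) * Xa ^ (m - N) else Q ^ Sn (N - m) * Xb ^ (N - m)

lemma Ve_E2 (Q Xa Xb : RR) (N m : ℕ) : Ve Q Xa Xb N m = Ve Q Xa Xb (N + 1) (m + 1) := by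
  unfold Ve
  rw [show m + 1 - (N + 1) = m - N from by omega, show N + 1 - (m + 1) = N - m from by omega]
  by_cases h : N ≤ m
  · rw [if_pos h, if_pos (by omega)]
  · rw [if_neg h, if_neg (by omega)]

lemma Ve_E1 (Q Xa Xb : RR) (hab : Xa * Xb = Q) (N m : ℕ) :
    Q ^ N * Xb * Ve Q Xa Xb N m = Q ^ m * Ve Q Xa Xb (N + 1) m := by
  unfold Ve
  rcases Nat.lt_or_ge m N with h2 | h2
  · -- m < N
    obtain ⟨t, rfl⟩ : ∃ t, N = m + (t + 1) := ⟨N - m - 1, by omega⟩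
    rw [if_neg (show ¬ (m + (t+1) ≤ m) from by omega),
        if_neg (show ¬ (m + (t+1) + 1 ≤ m) from by omega),
        show m + (t+1) - m = t + 1 from by omega,
        show m + (t+1) + 1 - m = t + 2 from by omega,
        Sn_succ (t+1), Sn_succ t]
    ring
  · rcases Nat.lt_or_ge m (N+1) with h3 | h3
    · -- m = N
      obtain rfl : m = N := by omega
      rw [if_pos (le_refl m), if_neg (show ¬ (m + 1 ≤ m) from by omega),
        Nat.sub_self, show m + 1 - m = 1 from by omega,
        show (Sn 1 : ℕ) = 0 from rfl, show (Sn 0 : ℕ) = 0 from rfl]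
      ring
    · obtain ⟨d, rfl⟩ : ∃ d, m = N + 1 + d := ⟨m - N - 1, by omega⟩
      rw [if_pos (show N ≤ N+1+d from by omega), if_pos (show N+1 ≤ N+1+d from by omega),
        show N + 1 + d - N = d + 1 from by omega, show N + 1 + d - (N + 1) = d from by omega,
        Sn_succ d]
      linear_combination (Q ^ (N + (Sn d + d)) * Xa ^ d) * hab

lemma Ve_E3 (Q Xa Xb : RR) (hab : Xa * Xb = Q) (N m : ℕ) (hm : m ≤ 2 * N) :
    Q ^ N * Xa * Ve Q Xa Xb N m = Q ^ (2 * N - m) * Ve Q Xa Xb (N + 1) (m + 2) := by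
  unfold Ve
  rcases Nat.lt_or_ge m N with h | h
  · rcases Nat.lt_or_ge (m + 1) N with h2 | h2
    · -- t ≥ 2
      obtain ⟨t, rfl⟩ : ∃ t, N = m + (t + 2) := ⟨N - m - 2, by omega⟩
      rw [if_neg (show ¬ (m + (t+2) ≤ m) from by omega),
        if_neg (show ¬ (m + (t+2) + 1 ≤ m + 2) from by omega),
        show m + (t+2) - m = t + 2 from by omega,
        show m + (t+2) + 1 - (m + 2) = t + 1 from by omega,
        show 2 * (m + (t+2)) - m = m + 2*t + 4 from by omega,
        Sn_succ (t+1), Sn_succ t]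
      linear_combination (Q ^ (m + 3*t + 3 + Sn t) * Xb ^ (t + 1)) * hab
    · -- N = m + 1
      obtain rfl : N = m + 1 := by omega
      rw [if_neg (show ¬ (m + 1 ≤ m) from by omega),
        if_pos (show m + 1 + 1 ≤ m + 2 from by omega),
        show m + 1 - m = 1 from by omega,
        show m + 2 - (m + 1 + 1) = 0 from by omega,
        show 2 * (m + 1) - m = m + 2 from by omega,
        show (Sn 1 : ℕ) = 0 from rfl, show (Sn 0 : ℕ) = 0 from rfl]
      linear_combination (Q ^ (m + 1)) * hab
  · -- N ≤ m
    obtain ⟨d, rfl⟩ : ∃ d, m = N + d := ⟨m - N, by omega⟩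
    obtain ⟨e, rfl⟩ : ∃ e, N = d + e := ⟨N - d, by omega⟩
    rw [if_pos (show d + e ≤ d + e + d from by omega),
      if_pos (show d + e + 1 ≤ d + e + d + 2 from by omega),
      show d + e + d - (d + e) = d from by omega,
      show d + e + d + 2 - (d + e + 1) = d + 1 from by omega,
      show 2 * (d + e) - (d + e + d) = e from by omega,
      Sn_succ d]
    ring

/-- coefficients of ∏_{i<N} (1 - z Q^i Xa)(z - Q^i Xb) -/
def Vb (Q Xa Xb : RR) : ℕ → ℕ → RR
  | 0, 0 => 1
  | 0, _ + 1 => 0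
  | N + 1, 0 => -(Q ^ N * Xb * Vb Q Xa Xb N 0)
  | N + 1, 1 => (1 + Q ^ (2 * N + 1)) * Vb Q Xa Xb N 0 - Q ^ N * Xb * Vb Q Xa Xb N 1
  | N + 1, m + 2 => (1 + Q ^ (2 * N + 1)) * Vb Q Xa Xb N (m + 1)
      - Q ^ N * Xb * Vb Q Xa Xb N (m + 2) - Q ^ N * Xa * Vb Q Xa Xb N m

lemma Vb_succ_zero (Q Xa Xb : RR) (N : ℕ) :
    Vb Q Xa Xb (N + 1) 0 = -(Q ^ N * Xb * Vb Q Xa Xb N 0) := rfl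

lemma Vb_succ_one (Q Xa Xb : RR) (N : ℕ) :
    Vb Q Xa Xb (N + 1) 1
      = (1 + Q ^ (2 * N + 1)) * Vb Q Xa Xb N 0 - Q ^ N * Xb * Vb Q Xa Xb N 1 := rfl

lemma Vb_succ_two (Q Xa Xb : RR) (N m : ℕ) :
    Vb Q Xa Xb (N + 1) (m + 2)
      = (1 + Q ^ (2 * N + 1)) * Vb Q Xa Xb N (m + 1)
        - Q ^ N * Xb * Vb Q Xa Xb N (m + 2) - Q ^ N * Xa * Vb Q Xa Xb N m := rfl

lemma Vb_eq_zero (Q Xa Xb : RR) : ∀ {N m : ℕ}, 2 * N < m → Vb Q Xa Xb N m = 0 := by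
  intro N
  induction N with
  | zero =>
    intro m hm
    obtain ⟨m', rfl⟩ : ∃ m', m = m' + 1 := ⟨m - 1, by omega⟩
    rfl
  | succ N ih =>
    intro m hm
    obtain ⟨m', rfl⟩ : ∃ m', m = m' + 2 := ⟨m - 2, by omega⟩
    rw [Vb_succ_two, ih (by omega), ih (by omega), ih (by omega)]
    ring

/-- the closed form -/
lemma Vb_formula (Q Xa Xb : RR) (hQ0 : constantCoeff Q = 0) (hab : Xa * Xb = Q) :
    ∀ N m : ℕ, Vb Q Xa Xb N m = (-1) ^ (N + m) * (qb Q (2 * N) m * Ve Q Xa Xb N m) := by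
  intro N
  induction N with
  | zero =>
    intro m
    match m with
    | 0 =>
      rw [show Vb Q Xa Xb 0 0 = 1 from rfl, show qb Q (2*0) 0 = 1 from rfl,
        show Ve Q Xa Xb 0 0 = Q ^ Sn (0-0) * Xa ^ (0-0) from by unfold Ve; rw [if_pos (le_refl 0)],
        Nat.sub_self, show (Sn 0 : ℕ) = 0 from rfl]
      ring
    | m + 1 =>
      rw [show Vb Q Xa Xb 0 (m+1) = 0 from rfl, qb_eq_zero Q (show 2*0 < m+1 from by omega)]
      ring
  | succ N ih =>
    intro m
    match m with
    | 0 =>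
      rw [Vb_succ_zero, ih 0, qb_zero_right, qb_zero_right]
      have hE1 := Ve_E1 Q Xa Xb hab N 0
      rw [pow_zero] at hE1
      linear_combination ((-1 : RR)) ^ (N + 1) * hE1
    | 1 =>
      rw [Vb_succ_one, ih 0, ih 1]
      have hq : qb Q (2 * (N + 1)) 1 = Q * qb Q (2*N) 1 + Q ^ (2*N+1) + 1 := by
        rw [show (2*(N+1) : ℕ) = (2*N+1)+1 from by omega,
          qb_pascal2 Q hQ0 (2*N+1) 0, qb_pascal1 Q (2*N) 0, qb_zero_right, qb_zero_right]
        rw [show (2*N - 0 : ℕ) = 2*N from by omega]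
        ring
      rw [hq, qb_zero_right]
      have hE1 := Ve_E1 Q Xa Xb hab N 1
      have hE2 := Ve_E2 Q Xa Xb N 0
      linear_combination ((-1:RR))^(N+1+1) * (1 + Q^(2*N+1)) * hE2
        + ((-1:RR))^(N+1+1) * qb Q (2*N) 1 * hE1
    | m + 2 =>
      rcases Nat.lt_or_ge (2*N) m with hbig | hm
      · rw [Vb_eq_zero Q Xa Xb (show 2*(N+1) < m+2 from by omega),
          qb_eq_zero Q (show 2*(N+1) < m+2 from by omega)]
        ring
      · rw [Vb_succ_two, ih m, ih (m+1), ih (m+2),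
          show (2*(N+1) : ℕ) = 2*N+2 from by omega, qb_double Q hQ0 N m hm]
        have hE1 := Ve_E1 Q Xa Xb hab N (m+2)
        have hE2 := Ve_E2 Q Xa Xb N (m+1)
        have hE3 := Ve_E3 Q Xa Xb hab N m hm
        linear_combination ((-1:RR))^(N+m+1) * (1 + Q^(2*N+1)) * qb Q (2*N) (m+1) * hE2
          + ((-1:RR))^(N+m+1) * qb Q (2*N) (m+2) * hE1
          + ((-1:RR))^(N+m+1) * qb Q (2*N) m * hE3

lemma peel_two (g : ℕ → RR) (K : ℕ) :
    ∑ m ∈ Finset.range (K+2), g m = (∑ m ∈ Finset.range K, g (m+2)) + g 1 + g 0 := by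
  rw [Finset.sum_range_succ' g (K+1), Finset.sum_range_succ' (fun m => g (m+1)) K]

/-- weighted-sum recurrence -/
lemma sum_Vb_rec (Q Xa Xb : RR) (w : ℕ → RR) (N : ℕ) :
    ∑ m ∈ Finset.range (2*N+3), w m * Vb Q Xa Xb (N+1) m
      = (1 + Q^(2*N+1)) * (∑ m ∈ Finset.range (2*N+1), w (m+1) * Vb Q Xa Xb N m)
        - Q^N * Xb * (∑ m ∈ Finset.range (2*N+1), w m * Vb Q Xa Xb N m)
        - Q^N * Xa * (∑ m ∈ Finset.range (2*N+1), w (m+2) * Vb Q Xa Xb N m) := by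
  have hpad1 : ∀ v : ℕ → RR, ∑ m ∈ Finset.range (2*N+2), v m * Vb Q Xa Xb N m
      = ∑ m ∈ Finset.range (2*N+1), v m * Vb Q Xa Xb N m := by
    intro v
    rw [Finset.sum_range_succ, Vb_eq_zero Q Xa Xb (by omega), mul_zero, add_zero]
  have hpeel : ∑ m ∈ Finset.range (2*N+3), w m * Vb Q Xa Xb (N+1) m
      = (∑ m ∈ Finset.range (2*N+1), w (m+2) * Vb Q Xa Xb (N+1) (m+2))
        + w 1 * Vb Q Xa Xb (N+1) 1 + w 0 * Vb Q Xa Xb (N+1) 0 :=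
    peel_two (fun m => w m * Vb Q Xa Xb (N+1) m) (2*N+1)
  have hrec : ∀ m ∈ Finset.range (2*N+1), w (m+2) * Vb Q Xa Xb (N+1) (m+2)
      = (1+Q^(2*N+1)) * (w (m+2) * Vb Q Xa Xb N (m+1))
        - Q^N*Xb * (w (m+2) * Vb Q Xa Xb N (m+2))
        - Q^N*Xa * (w (m+2) * Vb Q Xa Xb N m) := by
    intro m _
    rw [Vb_succ_two]
    ring
  have hs1 : ∑ m ∈ Finset.range (2*N+1), w (m+2) * Vb Q Xa Xb N (m+1)
      = (∑ m ∈ Finset.range (2*N+1), w (m+1) * Vb Q Xa Xb N m) - w 1 * Vb Q Xa Xb N 0 := by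
    have h : ∑ m ∈ Finset.range (2*N+2), w (m+1) * Vb Q Xa Xb N m
        = (∑ m ∈ Finset.range (2*N+1), w (m+2) * Vb Q Xa Xb N (m+1)) + w 1 * Vb Q Xa Xb N 0 :=
      Finset.sum_range_succ' (fun m => w (m+1) * Vb Q Xa Xb N m) (2*N+1)
    rw [hpad1 (fun m => w (m+1))] at h
    linear_combination -h
  have hs2 : ∑ m ∈ Finset.range (2*N+1), w (m+2) * Vb Q Xa Xb N (m+2)
      = (∑ m ∈ Finset.range (2*N+1), w m * Vb Q Xa Xb N m)
        - w 0 * Vb Q Xa Xb N 0 - w 1 * Vb Q Xa Xb N 1 := by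
    have h1 : ∑ m ∈ Finset.range (2*N+3), w m * Vb Q Xa Xb N m
        = (∑ m ∈ Finset.range (2*N+1), w (m+2) * Vb Q Xa Xb N (m+2))
          + w 1 * Vb Q Xa Xb N 1 + w 0 * Vb Q Xa Xb N 0 :=
      peel_two (fun m => w m * Vb Q Xa Xb N m) (2*N+1)
    have h2 : ∑ m ∈ Finset.range (2*N+3), w m * Vb Q Xa Xb N m
        = ∑ m ∈ Finset.range (2*N+1), w m * Vb Q Xa Xb N m := by
      rw [Finset.sum_range_succ, Vb_eq_zero Q Xa Xb (by omega), mul_zero, add_zero,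
        hpad1 w]
    rw [h2] at h1
    linear_combination -h1
  rw [hpeel, Finset.sum_congr rfl hrec, Finset.sum_sub_distrib, Finset.sum_sub_distrib,
    ← Finset.mul_sum, ← Finset.mul_sum, ← Finset.mul_sum, hs1, hs2, Vb_succ_one, Vb_succ_zero]
  ring

def Sv (Q Xa Xb : RR) (N : ℕ) : RR := ∑ m ∈ Finset.range (2*N+1), Vb Q Xa Xb N m

def Hv (Q Xa Xb : RR) (N : ℕ) : RR :=
  ∑ m ∈ Finset.range (2*N+1), ((m : ℕ) : RR) * Vb Q Xa Xb N m

lemma Sv_succ (Q Xa Xb : RR) (hab : Xa * Xb = Q) (N : ℕ) :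
    Sv Q Xa Xb (N+1) = ((1 - Q^N*Xa) * (1 - Q^N*Xb)) * Sv Q Xa Xb N := by
  have h := sum_Vb_rec Q Xa Xb (fun _ => (1:RR)) N
  simp only [one_mul] at h
  rw [Sv, Sv, show (2*(N+1)+1 : ℕ) = 2*N+3 from by omega, h]
  linear_combination - Q^(2*N) * (∑ m ∈ Finset.range (2*N+1), Vb Q Xa Xb N m) * hab

lemma Sv_eval (Q Xa Xb : RR) (hab : Xa * Xb = Q) (N : ℕ) :
    Sv Q Xa Xb N = ∏ i ∈ Finset.range N, ((1 - Q^i*Xa) * (1 - Q^i*Xb)) := by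
  induction N with
  | zero => simp [Sv]; rfl
  | succ N ih =>
    rw [Sv_succ Q Xa Xb hab N, ih, Finset.prod_range_succ]
    ring

lemma Hv_succ (Q Xa Xb : RR) (hab : Xa * Xb = Q) (N : ℕ) :
    Hv Q Xa Xb (N+1) = ((1 - Q^N*Xa) * (1 - Q^N*Xb)) * Hv Q Xa Xb N
      + ((1 + Q^(2*N+1)) - 2*(Q^N*Xa)) * Sv Q Xa Xb N := by
  have h := sum_Vb_rec Q Xa Xb (fun m => ((m : ℕ) : RR)) N
  have hc1 : ∑ m ∈ Finset.range (2*N+1), ((m+1 : ℕ) : RR) * Vb Q Xa Xb N m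
      = Hv Q Xa Xb N + Sv Q Xa Xb N := by
    rw [Hv, Sv, ← Finset.sum_add_distrib]
    refine Finset.sum_congr rfl fun m _ => ?_
    push_cast
    ring
  have hc2 : ∑ m ∈ Finset.range (2*N+1), ((m+2 : ℕ) : RR) * Vb Q Xa Xb N m
      = Hv Q Xa Xb N + 2 * Sv Q Xa Xb N := by
    rw [Hv, Sv, Finset.mul_sum, ← Finset.sum_add_distrib]
    refine Finset.sum_congr rfl fun m _ => ?_
    push_cast
    ring
  rw [Hv, show (2*(N+1)+1 : ℕ) = 2*N+3 from by omega, h, hc1, hc2]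
  rw [show ∑ m ∈ Finset.range (2*N+1), ((m:ℕ) : RR) * Vb Q Xa Xb N m = Hv Q Xa Xb N from rfl]
  linear_combination - Q^(2*N) * Hv Q Xa Xb N * hab

-- ============ Part 4a: stabilization and counting ============

lemma FQ_eq_Pf (c m : ℕ) : FQ ((X : RR)^c) m = Pf c m := by
  unfold FQ Pf
  refine Finset.prod_congr rfl fun i _ => ?_
  rw [← pow_mul]

lemma qb_stab (c : ℕ) (hc : 1 ≤ c) (N m : ℕ) (hm : m ≤ 2*N) :
    De (c * (min m (2*N - m) + 1)) (Pf c N * qb ((X:RR)^c) (2*N) m) 1 := by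
  set g := min m (2*N - m) with hg
  set r := c * (g + 1) with hr
  have h1 : qb ((X:RR)^c) (2*N) m * (Pf c m * Pf c (2*N - m)) = Pf c (2*N) := by
    rw [← FQ_eq_Pf c, ← FQ_eq_Pf c, ← FQ_eq_Pf c]
    exact qb_mul_FQ _ (2*N) m hm
  have hsm : De r (Pf c m) (Pf c g) := Pf_stab (le_refl r) (by omega)
  have hsm2 : De r (Pf c (2*N - m)) (Pf c g) := Pf_stab (le_refl r) (by omega)
  have hs2N : De r (Pf c (2*N)) (Pf c g) := Pf_stab (le_refl r) (by omega)
  have hsN : De r (Pf c N) (Pf c g) := Pf_stab (le_refl r) (by omega)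
  set G := Pf c g with hGdef
  have hGi : G * invOfUnit G 1 = 1 := mul_invOfUnit G 1 (by simp [hGdef, constCoeff_Pf c g hc])
  set Gi := invOfUnit G 1 with hGidef
  set u := qb ((X:RR)^c) (2*N) m with hu
  have step1 : De r (u * (G * G)) G := by
    refine De.trans (De.mul (De.rfl) (De.mul hsm.symm hsm2.symm)) ?_
    exact (De.of_eq h1).trans hs2N
  have step2 : De r (u * G) 1 := by
    have h2 := De.mul step1 (De.rfl (a := Gi))
    have e1 : u * (G * G) * Gi = (u * G) * (G * Gi) := by ring
    rw [e1, hGi, mul_one] at h2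
    exact h2
  exact (De.mul hsN De.rfl).trans ((De.of_eq (mul_comm G u)).trans step2)

lemma Sn_val (d : ℕ) : 2 * Sn d + d = d * d := by
  induction d with
  | zero => rfl
  | succ d ih =>
    have h : (d+1)*(d+1) = d*d + 2*d + 1 := by ring
    rw [Sn_succ, h, ← ih]
    ring

lemma Ve_gauss (N m : ℕ) : Ve ((X:RR)^2) X X N m = X ^ ((m-N)*(m-N) + (N-m)*(N-m)) := by
  unfold Ve
  by_cases h : N ≤ m
  · rw [if_pos h, show N - m = 0 from by omega, ← pow_mul, ← pow_add]
    congr 1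
    rw [← Sn_val (m - N)]
    omega
  · rw [if_neg h, show m - N = 0 from by omega, ← pow_mul, ← pow_add]
    congr 1
    rw [← Sn_val (N - m)]
    omega

lemma Ve_jac (N m : ℕ) : Ve ((X:RR)^1) (X^1) 1 N m = X ^ (Sn (m-N) + (m-N) + Sn (N-m)) := by
  unfold Ve
  by_cases h : N ≤ m
  · rw [if_pos h, show N - m = 0 from by omega, ← pow_mul, ← pow_mul, ← pow_add]
    congr 1
    rw [show Sn 0 = 0 from rfl]
    omega
  · rw [if_neg h, show m - N = 0 from by omega, one_pow, mul_one, ← pow_mul]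
    congr 1
    rw [show Sn 0 = 0 from rfl]
    omega

lemma neg_one_pow_mod (a b : ℕ) (h : a % 2 = b % 2) : ((-1 : ℤ))^a = (-1)^b := by
  conv_lhs => rw [← Nat.div_add_mod a 2]
  conv_rhs => rw [← Nat.div_add_mod b 2]
  rw [pow_add, pow_add, pow_mul, pow_mul, h]
  norm_num

lemma tri_inj {a b : ℕ} (h : a*(a+1) = b*(b+1)) : a = b := by
  rcases lt_trichotomy a b with hl | he | hg
  · exfalso; nlinarith
  · exact he
  · exfalso; nlinarith

lemma eight_tri (d i : ℕ) (h : Sn d + d = i) : (2*d+1)*(2*d+1) = 8*i+1 := by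
  have h1 := Sn_val d
  have h2 : (2*d+1)*(2*d+1) = 4*(d*d)+4*d+1 := by ring
  linarith

lemma tri_eq (d k i : ℕ) (hd : Sn d + d = i) (hk2 : k*(k+1) = 2*i) : d = k := by
  apply tri_inj (a := d) (b := k)
  have h1 := Sn_val d
  have h2 : d*(d+1) = d*d + d := by ring
  linarith

def phif (n : ℕ) : ℤ :=
  if Nat.sqrt n * Nat.sqrt n = n then (-1)^(Nat.sqrt n) * (if n = 0 then 1 else 2) else 0

def Phi : RR := mk phif

def jacf (n : ℕ) : ℤ :=
  if Nat.sqrt (8*n+1) * Nat.sqrt (8*n+1) = 8*n+1 then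
    (-1)^((Nat.sqrt (8*n+1) - 1)/2) * (2*((Nat.sqrt (8*n+1) - 1)/2) + 1)
  else 0

def J3 : RR := mk jacf

lemma countG (N i : ℕ) (hi : i < N) :
    (∑ m ∈ Finset.range (2*N+1),
      (-1:ℤ)^(N+m) * (if i = (m-N)*(m-N) + (N-m)*(N-m) then 1 else 0)) = phif i := by
  set s := Nat.sqrt i with hs
  by_cases hsq : s * s = i
  · rcases Nat.eq_zero_or_pos s with hs0 | hs1
    · -- i = 0
      have hi0 : i = 0 := by rw [← hsq, hs0]
      rw [Finset.sum_eq_single N]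
      · rw [Nat.sub_self, if_pos (by simp [hi0]), mul_one]
        have h1 : phif i = 1 := by subst hi0; simp [phif]
        rw [h1]
        have := neg_one_pow_mod (N+N) 0 (by omega)
        simpa using this
      · intro b hb hbN
        rw [if_neg, mul_zero]
        intro hc
        rw [hi0] at hc
        obtain ⟨h1, h2⟩ := Nat.add_eq_zero.mp hc.symm
        have hb1 : b - N = 0 := by
          have := mul_self_eq_zero.mp h1
          omega
        have hb2 : N - b = 0 := by
          have := mul_self_eq_zero.mp h2
          omega
        exact hbN (by omega)
      · intro hN
        exact absurd (Finset.mem_range.mpr (by omega)) hN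
    · -- s ≥ 1 : two terms
      have hsi : s ≤ i := by nlinarith
      have hsN : s < N := by omega
      have hmem1 : N - s ∈ Finset.range (2*N+1) := Finset.mem_range.mpr (by omega)
      rw [← Finset.add_sum_erase _ _ hmem1]
      have hmem2 : N + s ∈ (Finset.range (2*N+1)).erase (N - s) :=
        Finset.mem_erase.mpr ⟨by omega, Finset.mem_range.mpr (by omega)⟩
      rw [← Finset.add_sum_erase _ _ hmem2]
      have hval1 : (-1:ℤ)^(N+(N-s)) * (if i = (N-s-N)*(N-s-N) + (N-(N-s))*(N-(N-s)) then 1 else 0)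
          = (-1)^s := by
        rw [show N-s-N = 0 from by omega, show N-(N-s) = s from by omega,
          if_pos (by simpa using hsq.symm), mul_one]
        exact neg_one_pow_mod (N+(N-s)) s (by omega)
      have hval2 : (-1:ℤ)^(N+(N+s)) * (if i = (N+s-N)*(N+s-N) + (N-(N+s))*(N-(N+s)) then 1 else 0)
          = (-1)^s := by
        rw [show N+s-N = s from by omega, show N-(N+s) = 0 from by omega,
          if_pos (by simpa using hsq.symm), mul_one]
        exact neg_one_pow_mod (N+(N+s)) s (by omega)
      have hrest : ∀ b ∈ ((Finset.range (2*N+1)).erase (N-s)).erase (N+s),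
          (-1:ℤ)^(N+b) * (if i = (b-N)*(b-N) + (N-b)*(N-b) then 1 else 0) = 0 := by
        intro b hb
        obtain ⟨hb1, hb2, _⟩ := by
          simpa [Finset.mem_erase, Finset.mem_range] using hb
        rw [if_neg, mul_zero]
        intro hc
        rcases le_or_gt N b with hbN | hbN
        · rw [show N - b = 0 from by omega] at hc
          have h1 : (b - N) * (b - N) = s * s := by linarith
          have := Nat.mul_self_inj.mp h1
          omega
        · rw [show b - N = 0 from by omega] at hc
          have h1 : (N - b) * (N - b) = s * s := by linarith
          have := Nat.mul_self_inj.mp h1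
          omega
      rw [Finset.sum_eq_zero hrest, add_zero, hval1, hval2]
      simp only [phif]
      rw [← hs, if_pos hsq, if_neg (by omega)]
      ring
  · -- non-square
    have hz : phif i = 0 := by simp only [phif]; rw [← hs, if_neg hsq]
    rw [hz]
    refine Finset.sum_eq_zero fun b hb => ?_
    rw [if_neg, mul_zero]
    intro hc
    rcases le_or_gt N b with hbN | hbN
    · rw [show N - b = 0 from by omega] at hc
      have hdd : (b-N)*(b-N) = i := by linarith
      exact hsq (by rw [hs, ← hdd, Nat.sqrt_eq])
    · rw [show b - N = 0 from by omega] at hc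
      have hdd : (N-b)*(N-b) = i := by linarith
      exact hsq (by rw [hs, ← hdd, Nat.sqrt_eq])

lemma countJ (N i : ℕ) (hi : i < N) :
    (∑ m ∈ Finset.range (2*N+1),
      (m:ℤ) * ((-1:ℤ)^(N+m) * (if i = Sn (m-N) + (m-N) + Sn (N-m) then 1 else 0))) = jacf i := by
  set w := Nat.sqrt (8*i+1) with hw
  by_cases htri : w * w = 8*i+1
  · set k := (w - 1)/2 with hk
    have hwodd : w % 2 = 1 := by
      rcases Nat.even_or_odd w with he | ho
      · exfalso
        obtain ⟨u, hu⟩ := he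
        have hww : w * w = 4 * (u * u) := by rw [hu]; ring
        have h4 : 4 * (u * u) = 8 * i + 1 := by linarith
        obtain ⟨v, hv⟩ : ∃ v, u * u = v := ⟨_, rfl⟩
        rw [hv] at h4
        omega
      · obtain ⟨u, hu⟩ := ho
        omega
    have hwk : w = 2*k+1 := by omega
    have hkk : k*(k+1) = 2*i := by
      have h1 : (2*k+1)*(2*k+1) = 4*(k*(k+1)) + 1 := by ring
      rw [hwk] at htri
      linarith
    have hkN : k < N := by
      by_contra hcon
      push_neg at hcon
      have h1 : N*(N+1) ≤ k*(k+1) := Nat.mul_le_mul hcon (by omega)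
      have h2 : N ≤ N * N := Nat.le_mul_of_pos_left N (by omega)
      have h3 : N*(N+1) = N*N + N := by ring
      linarith
    have hSnk : Sn k + k = i := by
      have h1 := Sn_val k
      have h2 : k*(k+1) = k*k + k := by ring
      linarith
    have hmem1 : N - (k+1) ∈ Finset.range (2*N+1) := Finset.mem_range.mpr (by omega)
    rw [← Finset.add_sum_erase _ _ hmem1]
    have hmem2 : N + k ∈ (Finset.range (2*N+1)).erase (N - (k+1)) :=
      Finset.mem_erase.mpr ⟨by omega, Finset.mem_range.mpr (by omega)⟩
    rw [← Finset.add_sum_erase _ _ hmem2]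
    have hval1 : ((N - (k+1) : ℕ) : ℤ) * ((-1:ℤ)^(N+(N-(k+1)))
        * (if i = Sn (N-(k+1)-N) + (N-(k+1)-N) + Sn (N-(N-(k+1))) then 1 else 0))
        = - (((N:ℤ) - k - 1) * (-1)^k) := by
      rw [show N-(k+1)-N = 0 from by omega, show N-(N-(k+1)) = k+1 from by omega]
      rw [if_pos (by rw [show Sn 0 = 0 from rfl, Sn_succ]; omega), mul_one]
      rw [neg_one_pow_mod (N+(N-(k+1))) (k+1) (by omega)]
      rw [Nat.cast_sub (by omega : k+1 ≤ N)]
      push_cast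
      ring
    have hval2 : ((N + k : ℕ) : ℤ) * ((-1:ℤ)^(N+(N+k))
        * (if i = Sn (N+k-N) + (N+k-N) + Sn (N-(N+k)) then 1 else 0))
        = ((N:ℤ) + k) * (-1)^k := by
      rw [show N+k-N = k from by omega, show N-(N+k) = 0 from by omega]
      rw [if_pos (by rw [show Sn 0 = 0 from rfl]; omega), mul_one]
      rw [neg_one_pow_mod (N+(N+k)) k (by omega)]
      push_cast
      ring
    have hrest : ∀ b ∈ ((Finset.range (2*N+1)).erase (N-(k+1))).erase (N+k),
        (b:ℤ) * ((-1:ℤ)^(N+b) * (if i = Sn (b-N) + (b-N) + Sn (N-b) then 1 else 0)) = 0 := by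
      intro b hb
      obtain ⟨hb1, hb2, _⟩ := by
        simpa [Finset.mem_erase, Finset.mem_range] using hb
      rw [if_neg, mul_zero, mul_zero]
      intro hc
      rcases le_or_gt N b with hbN | hbN
      · rw [show N - b = 0 from by omega, show Sn 0 = 0 from rfl] at hc
        have hd : Sn (b-N) + (b-N) = i := by omega
        have := tri_eq (b-N) k i hd hkk
        omega
      · obtain ⟨t', hb'⟩ : ∃ t', N - b = t' + 1 := ⟨N-b-1, by omega⟩
        rw [show b - N = 0 from by omega, show Sn 0 = 0 from rfl, hb', Sn_succ] at hc
        have hd : Sn t' + t' = i := by omega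
        have := tri_eq t' k i hd hkk
        omega
    rw [Finset.sum_eq_zero hrest, add_zero, hval1, hval2]
    simp only [jacf]
    rw [← hw, if_pos htri, show (w-1)/2 = k from by omega,
      show ((w:ℤ) - 1)/2 = (k:ℤ) from by omega]
    push_cast
    ring
  · have hz : jacf i = 0 := by simp only [jacf]; rw [← hw, if_neg htri]
    rw [hz]
    refine Finset.sum_eq_zero fun b hb => ?_
    rw [if_neg, mul_zero, mul_zero]
    intro hc
    rcases le_or_gt N b with hbN | hbN
    · rw [show N - b = 0 from by omega, show Sn 0 = 0 from rfl] at hc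
      have hd : Sn (b-N) + (b-N) = i := by omega
      have h8 := eight_tri (b-N) i hd
      exact htri (by rw [hw, ← h8, Nat.sqrt_eq])
    · obtain ⟨t', hb'⟩ : ∃ t', N - b = t' + 1 := ⟨N-b-1, by omega⟩
      rw [show b - N = 0 from by omega, show Sn 0 = 0 from rfl, hb', Sn_succ] at hc
      have hd : Sn t' + t' = i := by omega
      have h8 := eight_tri t' i hd
      exact htri (by rw [hw, ← h8, Nat.sqrt_eq])

-- ============ Part 4b: Gauss and Jacobi identities ============

lemma De.xmul {r : ℕ} {a b : RR} (e : ℕ) (h : De r a b) : De (e + r) (X^e * a) (X^e * b) := by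
  have heq : X^e*a - X^e*b = X^e*(a-b) := by ring
  rw [De, heq, pow_add]
  exact mul_dvd_mul_left _ h

lemma coeff_xmul_one {r e i : ℕ} {u : RR} (h : De r u 1) (hi : i < e + r) :
    coeff i (X^e * u) = if i = e then 1 else 0 := by
  rw [PowerSeries.coeff_X_pow_mul']
  by_cases he : e ≤ i
  · rw [if_pos he, h.coeff (show i - e < r from by omega), coeff_one]
    by_cases h0 : i = e
    · rw [if_pos (by omega), if_pos h0]
    · rw [if_neg (by omega), if_neg h0]
  · rw [if_neg he, if_neg (by omega)]

lemma neg_one_pow_C (t : ℕ) : ((-1 : RR))^t = C ((-1)^t) := by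
  rw [map_pow, map_neg, map_one]

lemma Sn_lb (t : ℕ) : t ≤ Sn t + 1 := by
  induction t with
  | zero => omega
  | succ t ih => rw [Sn_succ]; omega

def Po (m : ℕ) : RR := ∏ i ∈ Finset.range m, (1 - X^(2*i+1))

lemma Po_succ (m : ℕ) : Po (m+1) = Po m * (1 - X^(2*m+1)) := Finset.prod_range_succ _ _

lemma Pf1_split (N : ℕ) : Pf 1 (2*N) = Pf 2 N * Po N := by
  induction N with
  | zero => simp [Pf, Po]
  | succ N ih =>
    rw [show 2*(N+1) = (2*N+1)+1 from by omega, Pf_succ, Pf_succ, ih, Pf_succ, Po_succ]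
    rw [show 1*((2*N)+1) = 2*N+1 from by omega, show 1*((2*N+1)+1) = 2*(N+1) from by omega]
    ring

lemma Sv_gauss (N : ℕ) : Sv ((X:RR)^2) X X N = Po N * Po N := by
  rw [Sv_eval ((X:RR)^2) X X (pow_two (X:RR)).symm N, Po, ← Finset.prod_mul_distrib]
  refine Finset.prod_congr rfl fun i _ => ?_
  rw [← pow_mul, ← pow_succ]

theorem gauss_id : (f 1)^2 = f 2 * Phi := by
  refine PowerSeries.ext fun n => ?_
  set N := n + 1 with hN
  have hf1 : De (n+1) (f 1) (Pf 1 (2*N)) :=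
    (De_f_Pf (le_refl 1) (n+1)).trans (Pf_stab (by omega) (by omega)).symm
  have hf2 : De (n+1) (f 2) (Pf 2 N) := De_f_Pf (by omega) N
  have h2 : De (n+1) ((f 1)^2) (∑ m ∈ Finset.range (2*N+1),
      Pf 2 N * (Pf 2 N * Vb ((X:RR)^2) X X N m)) := by
    refine ((De.of_eq (pow_two (f 1))).trans (De.mul hf1 hf1)).trans (De.of_eq ?_)
    rw [Pf1_split]
    rw [show (Pf 2 N * Po N) * (Pf 2 N * Po N) = Pf 2 N * Pf 2 N * (Po N * Po N) from by ring]
    rw [← Sv_gauss, Sv, Finset.mul_sum]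
    refine Finset.sum_congr rfl fun m _ => by ring
  have h4 : ∀ m ∈ Finset.range (2*N+1),
      De (n+1) (Pf 2 N * (Pf 2 N * Vb ((X:RR)^2) X X N m))
        ((C ((-1)^(N+m))) * (X^((m-N)*(m-N) + (N-m)*(N-m)) * Pf 2 N)) := by
    intro m hm
    rw [Finset.mem_range] at hm
    have hmle : m ≤ 2*N := by omega
    have hstab := qb_stab 2 (by omega) N m hmle
    set e := (m-N)*(m-N) + (N-m)*(N-m) with he
    set r := 2 * (min m (2*N - m) + 1) with hr
    have hbound : n + 1 ≤ e + r := by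
      have hhelp : ∀ d u : ℕ, n + 1 = d + u → n + 1 ≤ d*d + 2*(u+1) := by
        intro d u h
        rcases Nat.eq_zero_or_pos d with h0 | h0
        · subst h0; omega
        · have hd := Nat.le_mul_of_pos_left d h0
          linarith
      rcases le_or_gt N m with hc | hc
      · obtain ⟨d, rfl⟩ : ∃ d, m = N + d := ⟨m - N, by omega⟩
        rw [hr, he, show N + d - N = d from by omega, show N - (N+d) = 0 from by omega,
          show (N+d) ⊓ (2*N - (N+d)) = N - d from by omega,
          show N - d = n + 1 - d from by omega]
        have := hhelp d (n+1-d) (by omega)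
        norm_num
        linarith
      · rw [hr, he, show m - N = 0 from by omega,
          show m ⊓ (2*N - m) = m from by omega,
          show N - m = (n+1) - m from by omega]
        have := hhelp ((n+1)-m) m (by omega)
        norm_num
        linarith
    have hterm : Pf 2 N * (Pf 2 N * Vb ((X:RR)^2) X X N m)
        = (C ((-1)^(N+m))) * ((X^e * (Pf 2 N * qb ((X:RR)^2) (2*N) m)) * Pf 2 N) := by
      rw [Vb_formula ((X:RR)^2) X X (by simp) (pow_two (X:RR)).symm N m, Ve_gauss,
        neg_one_pow_C, ← he]
      ring
    rw [hterm]
    have hst : De (n+1) (X^e * (Pf 2 N * qb ((X:RR)^2) (2*N) m)) (X^e * 1) :=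
      (De.xmul e hstab).mono hbound
    refine De.mul De.rfl ?_
    refine (De.mul hst De.rfl).trans (De.of_eq ?_)
    rw [mul_one]
  have h5 : De (n+1) ((f 1)^2)
      (∑ m ∈ Finset.range (2*N+1),
        (C ((-1)^(N+m))) * (X^((m-N)*(m-N) + (N-m)*(N-m)) * Pf 2 N)) :=
    h2.trans (De.sum h4)
  have h6 : (∑ m ∈ Finset.range (2*N+1),
        (C ((-1)^(N+m))) * (X^((m-N)*(m-N) + (N-m)*(N-m)) * Pf 2 N))
      = (∑ m ∈ Finset.range (2*N+1),
          (C ((-1)^(N+m))) * X^((m-N)*(m-N) + (N-m)*(N-m))) * Pf 2 N := by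
    rw [Finset.sum_mul]
    exact Finset.sum_congr rfl fun m _ => by ring
  have hPhiN : De (n+1) (∑ m ∈ Finset.range (2*N+1),
      (C ((-1)^(N+m))) * X^((m-N)*(m-N)+(N-m)*(N-m))) Phi := by
    rw [De_iff_coeff]
    intro i hi
    rw [map_sum]
    have hterm : ∀ m ∈ Finset.range (2*N+1),
        coeff i ((C ((-1)^(N+m))) * X^((m-N)*(m-N)+(N-m)*(N-m)))
          = (-1:ℤ)^(N+m) * (if i = (m-N)*(m-N)+(N-m)*(N-m) then 1 else 0) := by
      intro m _
      rw [coeff_C_mul, coeff_X_pow]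
    rw [Finset.sum_congr rfl hterm, countG N i (by omega)]
    rw [Phi, coeff_mk]
  have hfinal : De (n+1) ((f 1)^2) (f 2 * Phi) := by
    refine (h5.trans (De.of_eq h6)).trans ?_
    exact (De.mul hPhiN hf2.symm).trans (De.of_eq (mul_comm _ _))
  exact hfinal.coeff (by omega)

-- ============ Part 4c: Jacobi identity ============

lemma Sv_jac_zero (N : ℕ) (h : 1 ≤ N) : Sv ((X:RR)^1) (X^1) 1 N = 0 := by
  rw [Sv_eval ((X:RR)^1) (X^1) 1 (mul_one _) N]
  refine Finset.prod_eq_zero (Finset.mem_range.mpr (show 0 < N from h)) ?_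
  simp

lemma Hv_jac : ∀ N : ℕ, 1 ≤ N → Hv ((X:RR)^1) (X^1) 1 N = Pf 1 N * Pf 1 (N-1) := by
  intro N
  induction N with
  | zero => omega
  | succ N ih =>
    intro _
    rcases Nat.eq_zero_or_pos N with h0 | h1
    · subst h0
      rw [Hv]
      rw [show 2*1+1 = 3 from rfl]
      rw [Finset.sum_range_succ, Finset.sum_range_succ, Finset.sum_range_succ,
        Finset.sum_range_zero]
      have e0 : Vb ((X:RR)^1) (X^1) 1 1 0 = -(((X:RR)^1)^0 * 1 * 1) := rfl
      have e1 : Vb ((X:RR)^1) (X^1) 1 1 1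
          = (1 + ((X:RR)^1)^(2*0+1)) * 1 - ((X:RR)^1)^0 * 1 * 0 := rfl
      have e2 : Vb ((X:RR)^1) (X^1) 1 1 2
          = (1 + ((X:RR)^1)^(2*0+1)) * 0 - ((X:RR)^1)^0 * 1 * 0
            - ((X:RR)^1)^0 * (X^1) * 1 := rfl
      rw [e0, e1, e2]
      rw [show (1:ℕ) - 1 = 0 from rfl, show Pf 1 0 = 1 from rfl,
        show Pf 1 1 = Pf 1 0 * (1 - X^(1*(0+1))) from Pf_succ 1 0,
        show Pf 1 0 = 1 from rfl]
      push_cast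
      ring
    · rw [Hv_succ _ _ _ (mul_one _) N, ih h1, Sv_jac_zero N h1]
      obtain ⟨M, rfl⟩ : ∃ M, N = M + 1 := ⟨N - 1, by omega⟩
      rw [show M + 1 + 1 - 1 = M + 1 from rfl, show M + 1 - 1 = M from rfl]
      rw [Pf_succ 1 (M+1), Pf_succ 1 M]
      rw [show 1*(M+1+1) = M+1+1 from by omega, show 1*(M+1) = M+1 from by omega]
      ring

theorem jac_id : (f 1)^3 = J3 := by
  refine PowerSeries.ext fun n => ?_
  set N := n + 1 with hN
  have hf1 : De (n+1) (f 1) (Pf 1 N) := De_f_Pf (le_refl 1) N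
  have hstep : De (n+1) (Pf 1 N) (Pf 1 (N-1)) := Pf_stab (by omega) (by omega)
  have h2 : De (n+1) ((f 1)^3) (Pf 1 N * Hv ((X:RR)^1) (X^1) 1 N) := by
    have ha : De (n+1) ((f 1)^3) (Pf 1 N * (Pf 1 N * Pf 1 (N-1))) := by
      refine (De.of_eq (show (f 1)^3 = f 1 * (f 1 * f 1) from by ring)).trans ?_
      exact De.mul hf1 (De.mul hf1 (hf1.trans hstep))
    refine ha.trans (De.of_eq ?_)
    rw [Hv_jac N (by omega)]
  rw [h2.coeff (show n < n+1 from by omega)]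
  rw [Hv, Finset.mul_sum, map_sum]
  have hterm : ∀ m ∈ Finset.range (2*N+1),
      coeff n (Pf 1 N * (((m:ℕ):RR) * Vb ((X:RR)^1) (X^1) 1 N m))
        = (m:ℤ) * ((-1:ℤ)^(N+m) * (if n = Sn (m-N) + (m-N) + Sn (N-m) then 1 else 0)) := by
    intro m hm
    rw [Finset.mem_range] at hm
    have hmle : m ≤ 2*N := by omega
    have hstab := qb_stab 1 (le_refl 1) N m hmle
    rw [one_mul] at hstab
    set e := Sn (m-N) + (m-N) + Sn (N-m) with he
    have hterm2 : Pf 1 N * (((m:ℕ):RR) * Vb ((X:RR)^1) (X^1) 1 N m)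
        = (C ((m:ℤ) * (-1)^(N+m))) * (X^e * (Pf 1 N * qb ((X:RR)^1) (2*N) m)) := by
      rw [Vb_formula ((X:RR)^1) (X^1) 1 (by simp) (mul_one _) N m, Ve_jac, neg_one_pow_C, ← he]
      rw [map_mul]
      rw [show (C (m:ℤ)) = ((m:ℕ):RR) from by rw [map_natCast]]
      ring
    rw [hterm2, coeff_C_mul]
    have hbound : n < e + (min m (2*N - m) + 1) := by
      rcases le_or_gt N m with hc | hc
      · rw [he, show N - m = 0 from by omega,
          show m ⊓ (2*N - m) = 2*N - m from by omega]
        have : Sn 0 = 0 := rfl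
        omega
      · rw [he, show m - N = 0 from by omega,
          show m ⊓ (2*N - m) = m from by omega]
        have h1 := Sn_lb (N - m)
        have : Sn 0 = 0 := rfl
        omega
    rw [coeff_xmul_one hstab hbound, mul_assoc]
  rw [Finset.sum_congr rfl hterm, countJ N n (by omega), J3, coeff_mk]

-- ============ Part 5: dissection arithmetic ============

lemma phif_sq {a : ℕ} (h : phif a ≠ 0) : (Nat.sqrt a) * (Nat.sqrt a) = a := by
  by_contra hc
  simp only [phif, if_neg hc] at h
  exact h rfl

lemma jacf_tri {b : ℕ} (h : jacf b ≠ 0) :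
    ∃ k, k*(k+1) = 2*b := by
  set w := Nat.sqrt (8*b+1) with hw
  by_cases htri : w * w = 8*b+1
  · have hwodd : w % 2 = 1 := by
      rcases Nat.even_or_odd w with he | ho
      · exfalso
        obtain ⟨u, hu⟩ := he
        have hww : w * w = 4 * (u * u) := by rw [hu]; ring
        have h4 : 4 * (u * u) = 8 * b + 1 := by linarith
        obtain ⟨v, hv⟩ : ∃ v, u * u = v := ⟨_, rfl⟩
        rw [hv] at h4
        omega
      · obtain ⟨u, hu⟩ := ho; omega
    refine ⟨(w-1)/2, ?_⟩
    have hwk : w = 2*((w-1)/2)+1 := by omega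
    set k := (w-1)/2
    have h1 : (2*k+1)*(2*k+1) = 4*(k*(k+1)) + 1 := by ring
    rw [hwk] at htri
    linarith
  · exfalso
    apply h
    simp only [jacf]
    rw [← hw, if_neg htri]

lemma sq_mod5 {s a : ℕ} (h : s * s = a) : a % 5 = 0 ∨ a % 5 = 1 ∨ a % 5 = 4 := by
  have h1 : a % 5 = (s%5) * (s%5) % 5 := by rw [← h, Nat.mul_mod]
  have hcases : s%5 = 0 ∨ s%5 = 1 ∨ s%5 = 2 ∨ s%5 = 3 ∨ s%5 = 4 := by omega
  rcases hcases with h'|h'|h'|h'|h' <;> rw [h'] at h1 <;> omega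

lemma tri_mod5 {k b : ℕ} (h : k*(k+1) = 2*b) :
    (b % 5 = 0 ∨ b % 5 = 1 ∨ b % 5 = 3) ∧ (b % 5 = 3 → k % 5 = 2) := by
  obtain ⟨q, r, hr, rfl⟩ : ∃ q r, r < 5 ∧ k = 5*q + r :=
    ⟨k/5, k%5, Nat.mod_lt _ (by norm_num), by omega⟩
  have h1 : (5*q+r)*((5*q+r)+1) = 5*(5*q*q + 2*q*r + q) + r*(r+1) := by ring
  obtain ⟨B, hB⟩ : ∃ B, 5*q*q + 2*q*r + q = B := ⟨_, rfl⟩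
  rw [hB] at h1
  have h3 : 2*b = 5*B + r*(r+1) := by rw [← h, h1]
  constructor
  · interval_cases r <;> omega
  · intro hb3
    interval_cases r <;> omega

lemma tri_k5 {k b : ℕ} (h : k*(k+1) = 2*b) (hk : k % 5 = 2) : b % 25 = 3 := by
  obtain ⟨q, rfl⟩ : ∃ q, k = 5*q + 2 := ⟨k/5, by omega⟩
  have h1 : (5*q+2)*((5*q+2)+1) = 25*(q*(q+1)) + 6 := by ring
  obtain ⟨c, hc⟩ := Nat.even_mul_succ_self q
  rw [hc] at h1
  have h3 : 2*b = 50*c + 6 := by rw [← h, h1]; ring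
  omega

lemma sq25 {a : ℕ} (h : phif a ≠ 0) (h5 : a % 5 = 0) : a % 25 = 0 := by
  have hs := phif_sq h
  have hdvd : (5:ℕ) ∣ Nat.sqrt a := by
    refine Nat.Prime.dvd_of_dvd_pow (p := 5) (by norm_num) (?_ : (5:ℕ) ∣ (Nat.sqrt a)^2)
    rw [pow_two, hs]
    omega
  obtain ⟨s', hs'⟩ := hdvd
  rw [hs'] at hs
  have h2 : (5*s')*(5*s') = 25*(s'*s') := by ring
  obtain ⟨v, hv⟩ : ∃ v, s'*s' = v := ⟨_, rfl⟩
  rw [h2, hv] at hs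
  omega

lemma tri25 {b : ℕ} (h : jacf b ≠ 0) (h5 : b % 5 = 3) : b % 25 = 3 := by
  obtain ⟨k, hk⟩ := jacf_tri h
  exact tri_k5 hk ((tri_mod5 hk).2 h5)

lemma phif_25 (u : ℕ) : phif (25*u) = phif u := by
  by_cases hsq : (Nat.sqrt u) * (Nat.sqrt u) = u
  · set s := Nat.sqrt u with hsdef
    have h25 : (5*s)*(5*s) = 25*u := by
      have e : (5*s)*(5*s) = 25*(s*s) := by ring
      rw [e, hsq]
    have hsqrt : Nat.sqrt (25*u) = 5*s := by rw [← h25, Nat.sqrt_eq]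
    simp only [phif]
    rw [hsqrt, if_pos h25, ← hsdef, if_pos hsq]
    rw [neg_one_pow_mod (5*s) s (by omega)]
    by_cases hu : u = 0
    · subst hu; norm_num
    · rw [if_neg (by omega), if_neg hu]
  · have h1 : phif u = 0 := by simp only [phif]; rw [if_neg hsq]
    have h2 : phif (25*u) = 0 := by
      simp only [phif]
      rw [if_neg]
      intro hc
      have hdvd : (5:ℕ) ∣ Nat.sqrt (25*u) := by
        refine Nat.Prime.dvd_of_dvd_pow (p := 5) (by norm_num)
          (?_ : (5:ℕ) ∣ (Nat.sqrt (25*u))^2)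
        rw [pow_two, hc]
        omega
      obtain ⟨t', ht'⟩ := hdvd
      rw [ht'] at hc
      have h3 : (5*t')*(5*t') = 25*(t'*t') := by ring
      rw [h3] at hc
      have h4 : t'*t' = u := by
        have := Nat.eq_of_mul_eq_mul_left (show 0 < 25 from by norm_num) hc
        exact this
      apply hsq
      have h5 : Nat.sqrt u = t' := by rw [← h4, Nat.sqrt_eq]
      rw [h5, h4]
    rw [h1, h2]

lemma jacf_25 (v : ℕ) : jacf (25*v+3) = 5 * jacf v := by
  set w := Nat.sqrt (8*v+1) with hw
  by_cases htri : w*w = 8*v+1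
  · have hwodd : w % 2 = 1 := by
      rcases Nat.even_or_odd w with he | ho
      · exfalso
        obtain ⟨u, hu⟩ := he
        have hww : w * w = 4 * (u * u) := by rw [hu]; ring
        have h4 : 4 * (u * u) = 8 * v + 1 := by linarith
        obtain ⟨z, hz⟩ : ∃ z, u * u = z := ⟨_, rfl⟩
        rw [hz] at h4
        omega
      · obtain ⟨u, hu⟩ := ho; omega
    set k := (w-1)/2 with hk
    have hwk : w = 2*k+1 := by omega
    have h200 : (5*w)*(5*w) = 8*(25*v+3)+1 := by
      have e : (5*w)*(5*w) = 25*(w*w) := by ring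
      rw [e, htri]
      ring
    have hsqrt : Nat.sqrt (8*(25*v+3)+1) = 5*w := by rw [← h200, Nat.sqrt_eq]
    simp only [jacf]
    rw [hsqrt, ← hw, if_pos h200, if_pos htri]
    rw [show (5*w-1)/2 = 5*k+2 from by omega, show (w-1)/2 = k from by omega]
    rw [show ((5*w : ℕ) : ℤ) = 5*(w:ℤ) from by push_cast; ring]
    rw [show (5*(w:ℤ)-1)/2 = 5*(k:ℤ)+2 from by omega, show ((w:ℤ)-1)/2 = (k:ℤ) from by omega]
    rw [neg_one_pow_mod (5*k+2) k (by omega)]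
    ring
  · have h1 : jacf v = 0 := by simp only [jacf]; rw [← hw, if_neg htri]
    have h2 : jacf (25*v+3) = 0 := by
      simp only [jacf]
      rw [if_neg]
      intro hc
      have hdvd : (5:ℕ) ∣ Nat.sqrt (8*(25*v+3)+1) := by
        refine Nat.Prime.dvd_of_dvd_pow (p := 5) (by norm_num)
          (?_ : (5:ℕ) ∣ (Nat.sqrt (8*(25*v+3)+1))^2)
        rw [pow_two, hc]
        omega
      obtain ⟨W', hW'⟩ := hdvd
      rw [hW'] at hc
      have h3 : (5*W')*(5*W') = 25*(W'*W') := by ring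
      rw [h3] at hc
      have h4 : W'*W' = 8*v+1 := by
        refine Nat.eq_of_mul_eq_mul_left (show 0 < 25 from by norm_num) ?_
        rw [hc]
        ring
      apply htri
      rw [hw, ← h4, Nat.sqrt_eq, h4]
    rw [h1, h2]
    ring

/-- the 5-dissection of Φ·J3 -/
lemma dissect (t : ℕ) :
    coeff (5*t+3) (Phi * J3)
      = if t % 5 = 0 then 5 * coeff (t/5) (Phi * J3) else 0 := by
  rw [PowerSeries.coeff_mul]
  have hco : ∀ x : ℕ × ℕ, coeff x.1 Phi * coeff x.2 J3 = phif x.1 * jacf x.2 := by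
    intro x
    rw [Phi, J3, coeff_mk, coeff_mk]
  rw [Finset.sum_congr rfl (fun x _ => hco x)]
  have hvan : ∀ x ∈ Finset.HasAntidiagonal.antidiagonal (5*t+3), phif x.1 * jacf x.2 ≠ 0 →
      (x.1 % 25 = 0 ∧ x.2 % 25 = 3) := by
    intro x hx hne
    rw [Finset.HasAntidiagonal.mem_antidiagonal] at hx
    have h1 : phif x.1 ≠ 0 := fun h => hne (by rw [h, zero_mul])
    have h2 : jacf x.2 ≠ 0 := fun h => hne (by rw [h, mul_zero])
    have hm1 := sq_mod5 (phif_sq h1)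
    obtain ⟨k, hk⟩ := jacf_tri h2
    have hm2 := (tri_mod5 hk).1
    have h5 : x.1 % 5 = 0 ∧ x.2 % 5 = 3 := by omega
    exact ⟨sq25 h1 h5.1, tri25 h2 h5.2⟩
  rw [← Finset.sum_filter_of_ne hvan]
  by_cases ht : t % 5 = 0
  · rw [if_pos ht, PowerSeries.coeff_mul]
    rw [Finset.sum_congr rfl (fun x _ => hco x), Finset.mul_sum]
    refine Finset.sum_bij' (fun x _ => (((x.1)/25, (x.2-3)/25) : ℕ × ℕ))
      (fun x _ => ((25*x.1, 25*x.2+3) : ℕ × ℕ)) ?_ ?_ ?_ ?_ ?_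
    · intro x hx
      simp only [Finset.mem_filter, Finset.HasAntidiagonal.mem_antidiagonal] at hx ⊢
      omega
    · intro x hx
      simp only [Finset.mem_filter, Finset.HasAntidiagonal.mem_antidiagonal] at hx ⊢
      omega
    · intro x hx
      simp only [Finset.mem_filter, Finset.HasAntidiagonal.mem_antidiagonal] at hx
      obtain ⟨x1, x2⟩ := x
      simp only [Prod.mk.injEq]
      constructor <;> omega
    · intro x hx
      simp only [Finset.HasAntidiagonal.mem_antidiagonal] at hx
      obtain ⟨x1, x2⟩ := x
      simp only [Prod.mk.injEq]
      constructor <;> omega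
    · intro x hx
      simp only [Finset.mem_filter, Finset.HasAntidiagonal.mem_antidiagonal] at hx
      obtain ⟨hsum, h25a, h25b⟩ := hx
      obtain ⟨u, hu⟩ : ∃ u, x.1 = 25*u := ⟨x.1/25, by omega⟩
      obtain ⟨v, hv⟩ : ∃ v, x.2 = 25*v+3 := ⟨(x.2-3)/25, by omega⟩
      beta_reduce
      rw [hu, hv, phif_25, jacf_25]
      rw [show 25*u/25 = u from by omega, show (25*v+3-3)/25 = v from by omega]
      ring
  · rw [if_neg ht]
    refine Finset.sum_eq_zero fun x hx => ?_
    simp only [Finset.mem_filter, Finset.HasAntidiagonal.mem_antidiagonal] at hx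
    omega

-- ============ Part 6: assembly ============

lemma hD_eq : f 1 ^ 5 * finv 2 = Phi * J3 := by
  have h1 : f 1 ^ 5 * finv 2 = (f 1^2) * (f 1^3) * finv 2 := by ring
  rw [h1, gauss_id, jac_id]
  have h2 : f 2 * Phi * J3 * finv 2 = (f 2 * finv 2) * (Phi * J3) := by ring
  rw [h2, f_mul_finv (by omega), one_mul]

lemma hf5 : E5 (f 1) = f 5 := by
  have := E5_f 1 (le_refl 1); norm_num at this; exact this

lemma hf10 : E5 (f 2) = f 10 := by
  have := E5_f 2 (by omega); norm_num at this; exact this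

lemma hfinv5 : E5 (finv 1) = finv 5 := by
  have := E5_finv 1 (le_refl 1); norm_num at this; exact this

lemma hfinv10 : E5 (finv 2) = finv 10 := by
  have := E5_finv 2 (by omega); norm_num at this; exact this

lemma conv (Dd Ww : RR)
    (hdis : ∀ t, coeff (5*t+3) Dd = if t % 5 = 0 then 5 * coeff (t/5) Dd else 0)
    (n : ℕ) :
    coeff (5*n+3) (Dd * E5 Ww) = 5 * coeff n (Ww * E5 Dd) := by
  rw [PowerSeries.coeff_mul, PowerSeries.coeff_mul, Finset.mul_sum]
  have hvan : ∀ x ∈ Finset.HasAntidiagonal.antidiagonal (5*n+3),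
      coeff x.1 Dd * coeff x.2 (E5 Ww) ≠ 0 → (x.1 % 25 = 3 ∧ x.2 % 5 = 0) := by
    intro x hx hne
    rw [Finset.HasAntidiagonal.mem_antidiagonal] at hx
    have h2 : x.2 % 5 = 0 := by
      by_contra hc
      exact hne (by rw [coeff_E5, if_neg hc, mul_zero])
    refine ⟨?_, h2⟩
    by_contra hc
    have h5 : x.1 % 5 = 3 := by omega
    obtain ⟨s, hs⟩ : ∃ s, x.1 = 5*s+3 := ⟨(x.1-3)/5, by omega⟩
    have hs5 : ¬ (s % 5 = 0) := by omega
    exact hne (by rw [hs, hdis s, if_neg hs5, zero_mul])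
  rw [← Finset.sum_filter_of_ne hvan]
  have hvan2 : ∀ x ∈ Finset.HasAntidiagonal.antidiagonal n,
      5 * (coeff x.1 Ww * coeff x.2 (E5 Dd)) ≠ 0 → (x.2 % 5 = 0) := by
    intro x hx hne
    by_contra hc
    exact hne (by rw [coeff_E5, if_neg hc, mul_zero, mul_zero])
  rw [← Finset.sum_filter_of_ne hvan2]
  refine Finset.sum_bij' (fun x _ => ((x.2/5, (x.1-3)/5) : ℕ × ℕ))
    (fun x _ => ((5*x.2+3, 5*x.1) : ℕ × ℕ)) ?_ ?_ ?_ ?_ ?_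
  · intro x hx
    simp only [Finset.mem_filter, Finset.HasAntidiagonal.mem_antidiagonal] at hx ⊢
    omega
  · intro x hx
    simp only [Finset.mem_filter, Finset.HasAntidiagonal.mem_antidiagonal] at hx ⊢
    omega
  · intro x hx
    simp only [Finset.mem_filter, Finset.HasAntidiagonal.mem_antidiagonal] at hx
    obtain ⟨x1, x2⟩ := x
    simp only [Prod.mk.injEq]
    constructor <;> omega
  · intro x hx
    simp only [Finset.mem_filter, Finset.HasAntidiagonal.mem_antidiagonal] at hx
    obtain ⟨x1, x2⟩ := x
    simp only [Prod.mk.injEq]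
    constructor <;> omega
  · intro x hx
    simp only [Finset.mem_filter, Finset.HasAntidiagonal.mem_antidiagonal] at hx
    obtain ⟨hsum, h25, h5⟩ := hx
    beta_reduce
    obtain ⟨m, hm⟩ : ∃ m, x.1 = 25*m+3 := ⟨(x.1-3)/25, by omega⟩
    obtain ⟨j, hj⟩ : ∃ j, x.2 = 5*j := ⟨x.2/5, by omega⟩
    rw [hm, hj]
    rw [show (25*m+3-3)/5 = 5*m from by omega, show 5*j/5 = j from by omega]
    rw [show 25*m+3 = 5*(5*m)+3 from by omega, hdis (5*m), if_pos (by omega),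
      show (5*m)/5 = m from by omega]
    rw [coeff_E5_mul5, coeff_E5_mul5]
    ring

end

end Stmt13

theorem stmt13 : ∀ n : ℕ, PowerSeries.coeff (5 * n + 3) (f 1 ^ 5 * f 10 ^ 5 * finv 2 * finv 5) = 5 * PowerSeries.coeff n (f 2 ^ 5 * f 5 ^ 5 * finv 1 * finv 10) := by
  intro n
  have hA : f 1 ^ 5 * f 10 ^ 5 * finv 2 * finv 5
      = (Stmt13.Phi * Stmt13.J3) * Stmt13.E5 (f 2 ^ 5 * finv 1) := by
    rw [map_mul, map_pow, Stmt13.hf10, Stmt13.hfinv5, ← Stmt13.hD_eq]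
    ring
  have hB : f 2 ^ 5 * f 5 ^ 5 * finv 1 * finv 10
      = (f 2 ^ 5 * finv 1) * Stmt13.E5 (Stmt13.Phi * Stmt13.J3) := by
    rw [← Stmt13.hD_eq, map_mul, map_pow, Stmt13.hf5, Stmt13.hfinv10]
    ring
  rw [hA, hB]
  exact Stmt13.conv (Stmt13.Phi * Stmt13.J3) (f 2 ^ 5 * finv 1) Stmt13.dissect n
end
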